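/- arXiv:1212.0048 — 5 statements merged into one kernel-verified Lean document; each statement's English description precedes it below -/
import Mathlib

section
/- For every integer U ≥ 1, W*(U) = [p ∣ U]·W(U/p) + [q ∣ U]·W(U/q) − [pq ∣ U]·W(U/(pq)), where [p ∣ U]·W(U/p) means W(U/p) if p divides U and 0 otherwise, and similarly for the other two terms. -/
/-- A strictly chained `(p,q)`-ary partition of `U`: a finite strictly decreasing
list of positive integers of the form `p^a * q^b`, each part divisible by the next,
summing to `U`. -/
def IsSCPartition (p q U : ℕ) (l : List ℕ) : Prop :=
  (∀ x ∈ l, ∃ a b : ℕ, x = p ^ a * q ^ b) ∧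
  List.Chain' (fun x y => y ∣ x ∧ y < x) l ∧
  l.sum = U

/-- The set of strictly chained `(p,q)`-ary partitions of `U`. -/
def Omega (p q U : ℕ) : Set (List ℕ) := {l | IsSCPartition p q U l}

/-- The subset of `Omega p q U` of partitions with no part equal to `1`. -/
def OmegaStar (p q U : ℕ) : Set (List ℕ) := {l | IsSCPartition p q U l ∧ 1 ∉ l}

/-- `W p q U` is the number of strictly chained `(p,q)`-ary partitions of `U`. -/
noncomputable def W (p q U : ℕ) : ℕ := (Omega p q U).ncard

/-- `Wstar p q U` is the number of strictly chained `(p,q)`-ary partitions of `U`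
with no part equal to `1`. -/
noncomputable def Wstar (p q U : ℕ) : ℕ := (OmegaStar p q U).ncard

/-- The set of partitions of `U` all of whose parts are divisible by `d`. -/
def Aset (p q d U : ℕ) : Set (List ℕ) := {l | IsSCPartition p q U l ∧ ∀ x ∈ l, d ∣ x}

lemma chain_pairwise {l : List ℕ} (h : List.Chain' (fun x y => y ∣ x ∧ y < x) l) :
    List.Pairwise (fun x y => y ∣ x ∧ y < x) l := by
  haveI : IsTrans ℕ (fun x y => y ∣ x ∧ y < x) :=
    ⟨fun a b c h1 h2 => ⟨h2.1.trans h1.1, h2.2.trans h1.2⟩⟩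
  exact List.isChain_iff_pairwise.mp h

lemma omega_finite (p q U : ℕ) : (Omega p q U).Finite := by
  apply Set.Finite.of_finite_image (f := List.toFinset)
  · apply Set.Finite.subset ((Finset.range (U + 1)).powerset.finite_toSet)
    rintro s ⟨l, hl, rfl⟩
    simp only [Finset.mem_coe, Finset.mem_powerset]
    intro x hx
    rw [List.mem_toFinset] at hx
    have : x ≤ l.sum := List.single_le_sum (fun y _ => Nat.zero_le y) x hx
    rw [hl.2.2] at this
    simpa [Finset.mem_range] using Nat.lt_succ_of_le this
  · intro l1 h1 l2 h2 he
    have hp1 := chain_pairwise h1.2.1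
    have hp2 := chain_pairwise h2.2.1
    have hn1 : l1.Nodup := hp1.imp fun h => Nat.ne_of_gt h.2
    have hn2 : l2.Nodup := hp2.imp fun h => Nat.ne_of_gt h.2
    have hperm := List.perm_of_nodup_nodup_toFinset_eq hn1 hn2 he
    haveI : IsAntisymm ℕ (· > ·) := ⟨fun a b h1 h2 => absurd h1 (not_lt.mpr h2.le)⟩
    exact List.Perm.eq_of_pairwise' (hp1.imp fun h => h.2) (hp2.imp fun h => h.2) hperm

lemma mul_list_mem_omega {p q d U : ℕ} (hd : 0 < d) (hdU : d ∣ U)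
    (hf1 : ∀ a b : ℕ, ∃ a' b', d * (p ^ a * q ^ b) = p ^ a' * q ^ b')
    (hf2 : ∀ x, (∃ a b : ℕ, x = p ^ a * q ^ b) → d ∣ x → ∃ a b : ℕ, x = d * (p ^ a * q ^ b)) :
    Aset p q d U = (fun l : List ℕ => l.map (d * ·)) '' Omega p q (U / d) := by
  have hd0 : d ≠ 0 := hd.ne'
  ext l
  constructor
  · rintro ⟨⟨hform, hchain, hsum⟩, hdvd⟩
    have hkey : ∀ x ∈ l, ∃ a b : ℕ, x = d * (p ^ a * q ^ b) :=
      fun x hx => hf2 x (hform x hx) (hdvd x hx)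
    have hl : (l.map (· / d)).map (fun x => d * x) = l := by
      rw [List.map_map]
      conv_rhs => rw [← List.map_id l]
      apply List.map_congr_left
      intro x hx
      exact Nat.mul_div_cancel' (hdvd x hx)
    refine ⟨l.map (· / d), ?_, hl⟩
    constructor
    · intro y hy
      rw [List.mem_map] at hy
      obtain ⟨x, hx, rfl⟩ := hy
      obtain ⟨a, b, rfl⟩ := hkey x hx
      exact ⟨a, b, by rw [Nat.mul_div_cancel_left _ hd]⟩
    constructor
    · have hc : List.Chain' (fun x y => y ∣ x ∧ y < x) ((l.map (· / d)).map (fun x => d * x)) := by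
        rw [hl]; exact hchain
      simp only [List.Chain', List.isChain_map] at hc ⊢
      refine hc.imp ?_
      intro x y hxy
      exact ⟨(mul_dvd_mul_iff_left hd0).mp hxy.1, Nat.lt_of_mul_lt_mul_left hxy.2⟩
    · have hs : ((l.map (· / d)).map (fun x => d * x)).sum = U := by rw [hl, hsum]
      rw [List.sum_map_mul_left, List.map_id'] at hs
      rw [← hs, Nat.mul_div_cancel_left _ hd]
  · rintro ⟨l', ⟨hform, hchain, hsum⟩, rfl⟩
    refine ⟨⟨?_, ?_, ?_⟩, ?_⟩
    · intro x hx
      rw [List.mem_map] at hx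
      obtain ⟨y, hy, rfl⟩ := hx
      obtain ⟨a, b, rfl⟩ := hform y hy
      obtain ⟨a', b', h⟩ := hf1 a b
      exact ⟨a', b', h⟩
    · simp only [List.Chain', List.isChain_map] at hchain ⊢
      refine hchain.imp ?_
      intro x y hxy
      exact ⟨mul_dvd_mul_left d hxy.1, (Nat.mul_lt_mul_left hd).mpr hxy.2⟩
    · rw [List.sum_map_mul_left, List.map_id', hsum, Nat.mul_div_cancel' hdU]
    · intro x hx
      rw [List.mem_map] at hx
      obtain ⟨y, hy, rfl⟩ := hx
      exact Dvd.intro y rfl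

lemma aset_ncard {p q d U : ℕ} (hd : 0 < d)
    (hf1 : ∀ a b : ℕ, ∃ a' b', d * (p ^ a * q ^ b) = p ^ a' * q ^ b')
    (hf2 : ∀ x, (∃ a b : ℕ, x = p ^ a * q ^ b) → d ∣ x → ∃ a b : ℕ, x = d * (p ^ a * q ^ b))
    (hU : 1 ≤ U) :
    (Aset p q d U).ncard = if d ∣ U then W p q (U / d) else 0 := by
  split_ifs with h
  · rw [mul_list_mem_omega hd h hf1 hf2, W]
    apply Set.ncard_image_of_injective
    exact List.map_injective_iff.mpr (mul_right_injective₀ hd.ne')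
  · have he : Aset p q d U = ∅ := by
      rw [Set.eq_empty_iff_forall_notMem]
      rintro l ⟨⟨_, _, hsum⟩, hdvd⟩
      exact h (hsum ▸ List.dvd_sum hdvd)
    rw [he, Set.ncard_empty]

lemma omegaStar_eq_union {p q U : ℕ} (hp : 1 < p) (hq : 1 < q) (hU : 1 ≤ U) :
    OmegaStar p q U = Aset p q p U ∪ Aset p q q U := by
  ext l
  constructor
  · rintro ⟨⟨hform, hchain, hsum⟩, hone⟩
    have hne : l ≠ [] := by
      rintro rfl
      simp at hsum
      omega
    have hpw := chain_pairwise hchain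
    have hrev : List.Pairwise (fun x y => x ∣ y ∧ x < y) l.reverse :=
      List.pairwise_reverse.mpr hpw
    obtain ⟨m, rest, hr⟩ := List.exists_cons_of_ne_nil (l := l.reverse) (by simpa using hne)
    rw [hr, List.pairwise_cons] at hrev
    have hm : m ∈ l := by
      rw [← List.mem_reverse, hr]; exact List.mem_cons_self
    have hmdvd : ∀ x ∈ l, m ∣ x := by
      intro x hx
      rw [← List.mem_reverse, hr, List.mem_cons] at hx
      rcases hx with rfl | hx
      · exact dvd_refl _
      · exact (hrev.1 x hx).1
    obtain ⟨a, b, hab⟩ := hform m hm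
    have hm1 : m ≠ 1 := fun h => hone (h ▸ hm)
    rcases Nat.eq_zero_or_pos a with ha | ha
    · rcases Nat.eq_zero_or_pos b with hb | hb
      · exfalso; apply hm1; rw [hab, ha, hb]; simp
      · right
        refine ⟨⟨hform, hchain, hsum⟩, fun x hx => dvd_trans ?_ (hmdvd x hx)⟩
        rw [hab]
        exact Dvd.dvd.mul_left (dvd_pow_self q hb.ne') _
    · left
      refine ⟨⟨hform, hchain, hsum⟩, fun x hx => dvd_trans ?_ (hmdvd x hx)⟩
      rw [hab]
      exact Dvd.dvd.mul_right (dvd_pow_self p ha.ne') _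
  · rintro (⟨hsc, hdvd⟩ | ⟨hsc, hdvd⟩)
    · exact ⟨hsc, fun h1 => by have := Nat.le_of_dvd one_pos (hdvd 1 h1); omega⟩
    · exact ⟨hsc, fun h1 => by have := Nat.le_of_dvd one_pos (hdvd 1 h1); omega⟩

lemma aset_inter {p q U : ℕ} (hpq : Nat.Coprime p q) :
    Aset p q p U ∩ Aset p q q U = Aset p q (p * q) U := by
  ext l
  constructor
  · rintro ⟨⟨hsc, hp⟩, ⟨_, hq⟩⟩
    exact ⟨hsc, fun x hx => hpq.mul_dvd_of_dvd_of_dvd (hp x hx) (hq x hx)⟩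
  · rintro ⟨hsc, hd⟩
    exact ⟨⟨hsc, fun x hx => (dvd_mul_right p q).trans (hd x hx)⟩,
           ⟨hsc, fun x hx => (dvd_mul_left q p).trans (hd x hx)⟩⟩

theorem Wstar_eq (p q : ℕ) (hp : 1 < p) (hq : 1 < q) (hpq : Nat.Coprime p q)
    (U : ℕ) (hU : 1 ≤ U) :
    (Wstar p q U : ℤ) =
      (if p ∣ U then (W p q (U / p) : ℤ) else 0) +
      (if q ∣ U then (W p q (U / q) : ℤ) else 0) -
      (if p * q ∣ U then (W p q (U / (p * q)) : ℤ) else 0) := by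
  have hp0 : 0 < p := by omega
  have hq0 : 0 < q := by omega
  -- divisibility facilities
  have hf1p : ∀ a b : ℕ, ∃ a' b', p * (p ^ a * q ^ b) = p ^ a' * q ^ b' :=
    fun a b => ⟨a + 1, b, by ring⟩
  have hf1q : ∀ a b : ℕ, ∃ a' b', q * (p ^ a * q ^ b) = p ^ a' * q ^ b' :=
    fun a b => ⟨a, b + 1, by ring⟩
  have hf1pq : ∀ a b : ℕ, ∃ a' b', p * q * (p ^ a * q ^ b) = p ^ a' * q ^ b' :=
    fun a b => ⟨a + 1, b + 1, by ring⟩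
  have hap : ∀ x, (∃ a b : ℕ, x = p ^ a * q ^ b) → p ∣ x →
      ∃ a b : ℕ, x = p * (p ^ a * q ^ b) := by
    rintro x ⟨a, b, rfl⟩ hdvd
    rcases Nat.eq_zero_or_pos a with rfl | ha
    · exfalso
      rw [pow_zero, one_mul] at hdvd
      have := (hpq.pow_right b).eq_one_of_dvd hdvd
      omega
    · obtain ⟨a', rfl⟩ := Nat.exists_eq_add_of_le ha
      exact ⟨a', b, by ring⟩
  have haq : ∀ x, (∃ a b : ℕ, x = p ^ a * q ^ b) → q ∣ x →
      ∃ a b : ℕ, x = q * (p ^ a * q ^ b) := by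
    rintro x ⟨a, b, rfl⟩ hdvd
    rcases Nat.eq_zero_or_pos b with rfl | hb
    · exfalso
      rw [pow_zero, mul_one] at hdvd
      have := (hpq.symm.pow_right a).eq_one_of_dvd hdvd
      omega
    · obtain ⟨b', rfl⟩ := Nat.exists_eq_add_of_le hb
      exact ⟨a, b', by ring⟩
  have hapq : ∀ x, (∃ a b : ℕ, x = p ^ a * q ^ b) → p * q ∣ x →
      ∃ a b : ℕ, x = p * q * (p ^ a * q ^ b) := by
    intro x hx hdvd
    obtain ⟨a, b, rfl⟩ := hap x hx ((dvd_mul_right p q).trans hdvd)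
    have hqd : q ∣ p ^ a * q ^ b :=
      hpq.symm.dvd_of_dvd_mul_left ((dvd_mul_left q p).trans hdvd)
    obtain ⟨a', b', hab⟩ := haq _ ⟨a, b, rfl⟩ hqd
    exact ⟨a', b', by rw [hab]; ring⟩
  -- finiteness
  have hAfin : (Aset p q p U).Finite :=
    (omega_finite p q U).subset fun l hl => hl.1
  have hBfin : (Aset p q q U).Finite :=
    (omega_finite p q U).subset fun l hl => hl.1
  -- inclusion-exclusion
  have key := Set.ncard_union_add_ncard_inter (Aset p q p U) (Aset p q q U) hAfin hBfin
  have hA := aset_ncard (p := p) (q := q) hp0 hf1p hap hU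
  have hB := aset_ncard (p := p) (q := q) hq0 hf1q haq hU
  have hAB := aset_ncard (p := p) (q := q) (d := p * q) (Nat.mul_pos hp0 hq0) hf1pq hapq hU
  rw [aset_inter hpq] at key
  have hWs : Wstar p q U = (Aset p q p U ∪ Aset p q q U).ncard := by
    rw [Wstar, omegaStar_eq_union hp hq hU]
  rw [hWs]
  rw [hA] at key; rw [hB] at key; rw [hAB] at key
  have := congrArg (fun n : ℕ => (n : ℤ)) key
  push_cast at this ⊢
  split_ifs at this ⊢ <;> omega
end

section
/- For every integer U ≥ 1 such that Ω(pqU) is nonempty: (i) at least one of Ω(pU), Ω(qU) is nonempty and σ(pqU) is the minimum of σ(pU) and σ(qU), where a term is omitted from the minimum if the corresponding set is empty; and (ii) Ω(pqU+1) is nonempty and σ(pqU+1) = 1 + σ(pqU). -/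
/-- `sigma p q U` is the minimum number of parts of a strictly chained `(p,q)`-ary
partition of `U` (when `Omega p q U` is nonempty). -/
noncomputable def sigmaMin (p q U : ℕ) : ℕ := sInf {n | ∃ l ∈ Omega p q U, l.length = n}

namespace SCAux

abbrev R : ℕ → ℕ → Prop := fun x y => y ∣ x ∧ y < x

instance : IsTrans ℕ R :=
  ⟨fun _ _ _ h1 h2 => ⟨h2.1.trans h1.1, h2.2.trans h1.2⟩⟩

lemma chain'_iff : ∀ {l : List ℕ}, List.Chain' R l ↔ List.Pairwise R l :=
  List.isChain_iff_pairwise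

lemma part_pos {p q x : ℕ} (hp : 1 < p) (hq : 1 < q) (h : ∃ a b, x = p ^ a * q ^ b) :
    0 < x := by
  obtain ⟨a, b, rfl⟩ := h
  exact Nat.mul_pos (Nat.pow_pos (by omega) : 0 < p ^ a) (Nat.pow_pos (by omega) : 0 < q ^ b)

lemma part_dvd_cases {p q x : ℕ} (hp : 1 < p) (hq : 1 < q)
    (h : ∃ a b, x = p ^ a * q ^ b) (hx : x ≠ 1) : p ∣ x ∨ q ∣ x := by
  obtain ⟨a, b, rfl⟩ := h
  rcases Nat.eq_zero_or_pos a with ha | ha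
  · rcases Nat.eq_zero_or_pos b with hb | hb
    · simp [ha, hb] at hx
    · right
      exact Dvd.dvd.mul_left (dvd_pow_self q (by omega)) _
  · left
    exact Dvd.dvd.mul_right (dvd_pow_self p (by omega)) _

lemma part_div {p q r x : ℕ} (hp : 1 < p) (hq : 1 < q) (hpq : Nat.Coprime p q)
    (hr : r = p ∨ r = q) (h : ∃ a b, x = p ^ a * q ^ b) (hd : r ∣ x) :
    ∃ a b, x / r = p ^ a * q ^ b := by
  obtain ⟨a, b, rfl⟩ := h
  rcases hr with rfl | rfl
  · have ha : a ≠ 0 := by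
      rintro rfl
      simp only [pow_zero, one_mul] at hd
      have := Nat.Coprime.eq_one_of_dvd (hpq.pow_right b) hd
      omega
    refine ⟨a - 1, b, ?_⟩
    obtain ⟨a', rfl⟩ : ∃ a', a = a' + 1 := ⟨a - 1, by omega⟩
    rw [pow_succ]
    rw [show r ^ a' * r * q ^ b = r * (r ^ a' * q ^ b) by ring]
    simp [Nat.mul_div_cancel_left _ (by omega : 0 < r)]
  · have hb : b ≠ 0 := by
      rintro rfl
      simp only [pow_zero, mul_one] at hd
      have := Nat.Coprime.eq_one_of_dvd (hpq.symm.pow_right a) hd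
      omega
    refine ⟨a, b - 1, ?_⟩
    obtain ⟨b', rfl⟩ : ∃ b', b = b' + 1 := ⟨b - 1, by omega⟩
    rw [pow_succ]
    rw [show p ^ a * (r ^ b' * r) = r * (p ^ a * r ^ b') by ring]
    simp [Nat.mul_div_cancel_left _ (by omega : 0 < r)]

/-- Multiplying each part by `r ∈ {p,q}` maps `Omega p q V` into `Omega p q (V * r)`. -/
lemma omega_map_mul {p q r V : ℕ} (hp : 1 < p) (hq : 1 < q) (hr : r = p ∨ r = q)
    {m : List ℕ} (hm : m ∈ Omega p q V) :
    m.map (· * r) ∈ Omega p q (V * r) := by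
  obtain ⟨hparts, hchain, hsum⟩ := hm
  have hr0 : 0 < r := by rcases hr with rfl | rfl <;> omega
  refine ⟨?_, ?_, ?_⟩
  · intro x hx
    obtain ⟨y, hy, rfl⟩ := List.mem_map.mp hx
    obtain ⟨a, b, rfl⟩ := hparts y hy
    rcases hr with rfl | rfl
    · exact ⟨a + 1, b, by ring⟩
    · exact ⟨a, b + 1, by ring⟩
  · rw [chain'_iff] at hchain ⊢
    rw [List.pairwise_map]
    refine hchain.imp fun {a b} hab => ?_
    exact ⟨Nat.mul_dvd_mul_right hab.1 r, (Nat.mul_lt_mul_right hr0).mpr hab.2⟩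
  · rw [← hsum]
    simpa using (List.sum_map_mul_right m id r)

/-- If every part of `l ∈ Omega p q N` is divisible by `r ∈ {p,q}`, then dividing
each part by `r` gives an element of `Omega p q (N / r)`, and `r ∣ N`. -/
lemma omega_map_div {p q r N : ℕ} (hp : 1 < p) (hq : 1 < q) (hpq : Nat.Coprime p q)
    (hr : r = p ∨ r = q) {l : List ℕ} (hl : l ∈ Omega p q N)
    (hdvd : ∀ x ∈ l, r ∣ x) :
    r ∣ N ∧ l.map (· / r) ∈ Omega p q (N / r) := by
  obtain ⟨hparts, hchain, hsum⟩ := hl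
  have hr0 : 0 < r := by rcases hr with rfl | rfl <;> omega
  have hrN : r ∣ N := hsum ▸ List.dvd_sum hdvd
  have hrec : (l.map (· / r)).map (· * r) = l := by
    rw [List.map_map]
    refine List.map_congr_left (fun x hx => ?_) |>.trans l.map_id
    exact Nat.div_mul_cancel (hdvd x hx)
  refine ⟨hrN, ?_, ?_, ?_⟩
  · intro x hx
    obtain ⟨y, hy, rfl⟩ := List.mem_map.mp hx
    exact part_div hp hq hpq hr (hparts y hy) (hdvd y hy)
  · rw [chain'_iff] at hchain ⊢
    rw [← hrec, List.pairwise_map] at hchain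
    refine hchain.imp fun {a b} hab => ?_
    exact ⟨(Nat.mul_dvd_mul_iff_right hr0).mp hab.1, Nat.lt_of_mul_lt_mul_right hab.2⟩
  · have : ((l.map (· / r)).map (· * r)).sum = (l.map (· / r)).sum * r := by
      simpa using (List.sum_map_mul_right (l.map (· / r)) id r)
    rw [hrec, hsum] at this
    rw [this, Nat.mul_div_cancel _ hr0]

lemma getLast_dvd_all {l : List ℕ} (h : l ≠ []) (hc : List.Pairwise R l) :
    ∀ x ∈ l, l.getLast h ∣ x := by
  intro x hx
  conv at hc => rw [← List.dropLast_append_getLast h]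
  conv at hx => rw [← List.dropLast_append_getLast h]
  rw [List.pairwise_append] at hc
  rcases List.mem_append.mp hx with hx | hx
  · exact (hc.2.2 x hx _ (List.mem_singleton_self _)).1
  · rw [List.mem_singleton] at hx
    exact hx ▸ dvd_refl _

/-- If `1 ∈ l` and `l` is pairwise strictly decreasing with positive entries,
then `1` is the last element. -/
lemma one_is_last {l : List ℕ} (h : l ≠ []) (hc : List.Pairwise R l)
    (hpos : ∀ x ∈ l, 0 < x) (h1 : (1 : ℕ) ∈ l) : l.getLast h = 1 := by
  conv at hc => rw [← List.dropLast_append_getLast h]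
  conv at h1 => rw [← List.dropLast_append_getLast h]
  rw [List.pairwise_append] at hc
  rcases List.mem_append.mp h1 with h1 | h1
  · have := (hc.2.2 1 h1 _ (List.mem_singleton_self _)).2
    have := hpos _ (List.getLast_mem h)
    omega
  · exact (List.mem_singleton.mp h1).symm

/-- No strictly chained partition of `p*q*U` (with `U ≥ 1`) contains the part `1`. -/
lemma one_not_mem {p q U : ℕ} (hp : 1 < p) (hq : 1 < q) (hpq : Nat.Coprime p q)
    (hU : 1 ≤ U) {l : List ℕ} (hl : l ∈ Omega p q (p * q * U)) : 1 ∉ l := by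
  intro h1
  obtain ⟨hparts, hchain, hsum⟩ := hl
  rw [chain'_iff] at hchain
  have hN : 4 ≤ p * q * U := by
    calc 4 = 2 * 2 * 1 := by norm_num
    _ ≤ p * q * U := by
      exact Nat.mul_le_mul (Nat.mul_le_mul (by omega) (by omega)) hU
  have hne : l ≠ [] := by rintro rfl; simp at hsum; omega
  have hpos : ∀ x ∈ l, 0 < x := fun x hx => part_pos hp hq (hparts x hx)
  have hlast : l.getLast hne = 1 := one_is_last hne hchain hpos h1
  set d := l.dropLast with hd
  have hld : d ++ [1] = l := by rw [hd, ← hlast]; exact List.dropLast_append_getLast hne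
  have hdc : List.Pairwise R d := hchain.sublist (List.dropLast_sublist l)
  have hdsum : d.sum + 1 = p * q * U := by rw [← hsum, ← hld]; simp
  have hdn : d ≠ [] := by
    intro h0
    rw [h0] at hdsum; simp at hdsum; omega
  -- the last element of d is > 1 and divides d.sum
  have hdR : ∀ x ∈ d, R x 1 := by
    conv at hchain => rw [← hld]
    rw [List.pairwise_append] at hchain
    intro x hx
    exact hchain.2.2 x hx _ (List.mem_singleton_self _)
  have hg : d.getLast hdn ∈ d := List.getLast_mem hdn
  have hgl : d.getLast hdn ∈ l := by rw [← hld]; exact List.mem_append_left _ hg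
  have hgt : 1 < d.getLast hdn := (hdR _ hg).2
  have hdvdsum : d.getLast hdn ∣ d.sum :=
    List.dvd_sum (getLast_dvd_all hdn hdc)
  have hcases : p ∣ d.getLast hdn ∨ q ∣ d.getLast hdn :=
    part_dvd_cases hp hq (hparts _ hgl) (by omega)
  rcases hcases with hc | hc
  · have h1 : p ∣ d.sum := hc.trans hdvdsum
    have h2 : p ∣ p * q * U := Dvd.dvd.mul_right (dvd_mul_right p q) U
    have : p ∣ 1 := by
      have := Nat.dvd_sub h2 h1
      rwa [show p * q * U - d.sum = 1 by omega] at this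
    exact absurd (Nat.dvd_one.mp this) (by omega)
  · have h1 : q ∣ d.sum := hc.trans hdvdsum
    have h2 : q ∣ p * q * U := Dvd.dvd.mul_right (dvd_mul_left q p) U
    have : q ∣ 1 := by
      have := Nat.dvd_sub h2 h1
      rwa [show p * q * U - d.sum = 1 by omega] at this
    exact absurd (Nat.dvd_one.mp this) (by omega)

/-- Key structural lemma for `p*q*U`. -/
lemma key1 {p q U : ℕ} (hp : 1 < p) (hq : 1 < q) (hpq : Nat.Coprime p q)
    (hU : 1 ≤ U) (n : ℕ) :
    (∃ l ∈ Omega p q (p * q * U), l.length = n) ↔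
      (∃ l ∈ Omega p q (p * U), l.length = n) ∨ (∃ l ∈ Omega p q (q * U), l.length = n) := by
  constructor
  · rintro ⟨l, hl, rfl⟩
    have h1 : 1 ∉ l := one_not_mem hp hq hpq hU hl
    obtain ⟨hparts, hchain, hsum⟩ := hl
    rw [chain'_iff] at hchain
    have hne : l ≠ [] := by
      rintro rfl
      simp at hsum
      have : 0 < p * q * U := by positivity
      omega
    have hg : l.getLast hne ∈ l := List.getLast_mem hne
    have hgt : l.getLast hne ≠ 1 := fun h => h1 (h ▸ hg)
    have hdl : ∀ x ∈ l, l.getLast hne ∣ x := getLast_dvd_all hne hchain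
    rcases part_dvd_cases hp hq (hparts _ hg) hgt with hc | hc
    · -- p divides everything; divide by p, land in Omega (q*U)
      right
      have hdvd : ∀ x ∈ l, p ∣ x := fun x hx => hc.trans (hdl x hx)
      have := (omega_map_div hp hq hpq (Or.inl rfl) ⟨hparts, chain'_iff.mpr hchain, hsum⟩ hdvd).2
      refine ⟨l.map (· / p), ?_, by simp⟩
      rwa [show p * q * U / p = q * U by
        rw [mul_assoc, Nat.mul_div_cancel_left _ (by omega : 0 < p)]] at this
    · left
      have hdvd : ∀ x ∈ l, q ∣ x := fun x hx => hc.trans (hdl x hx)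
      have := (omega_map_div hp hq hpq (Or.inr rfl) ⟨hparts, chain'_iff.mpr hchain, hsum⟩ hdvd).2
      refine ⟨l.map (· / q), ?_, by simp⟩
      rwa [show p * q * U / q = p * U by
        rw [show p * q * U = q * (p * U) by ring, Nat.mul_div_cancel_left _ (by omega : 0 < q)]] at this
  · rintro (⟨m, hm, rfl⟩ | ⟨m, hm, rfl⟩)
    · refine ⟨m.map (· * q), ?_, by simp⟩
      have := omega_map_mul hp hq (Or.inr rfl) hm
      rwa [show p * U * q = p * q * U by ring] at this
    · refine ⟨m.map (· * p), ?_, by simp⟩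
      have := omega_map_mul hp hq (Or.inl rfl) hm
      rwa [show q * U * p = p * q * U by ring] at this

/-- Key structural lemma for `p*q*U + 1`. -/
lemma key2 {p q U : ℕ} (hp : 1 < p) (hq : 1 < q) (hpq : Nat.Coprime p q)
    (hU : 1 ≤ U) (n : ℕ) :
    (∃ l ∈ Omega p q (p * q * U + 1), l.length = n) ↔
      (∃ m ∈ Omega p q (p * q * U), m.length + 1 = n) := by
  constructor
  · rintro ⟨l, hl, rfl⟩
    obtain ⟨hparts, hchain, hsum⟩ := hl
    rw [chain'_iff] at hchain
    have hne : l ≠ [] := by rintro rfl; simp at hsum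
    have hpos : ∀ x ∈ l, 0 < x := fun x hx => part_pos hp hq (hparts x hx)
    have hg : l.getLast hne ∈ l := List.getLast_mem hne
    have hdl : ∀ x ∈ l, l.getLast hne ∣ x := getLast_dvd_all hne hchain
    have hlast : l.getLast hne = 1 := by
      by_contra hgt
      have hdvdsum : l.getLast hne ∣ p * q * U + 1 := hsum ▸ List.dvd_sum hdl
      rcases part_dvd_cases hp hq (hparts _ hg) hgt with hc | hc
      · have h2 : p ∣ p * q * U := Dvd.dvd.mul_right (dvd_mul_right p q) U
        have : p ∣ 1 := by
          have := Nat.dvd_sub (hc.trans hdvdsum) h2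
          simpa using this
        exact absurd (Nat.dvd_one.mp this) (by omega)
      · have h2 : q ∣ p * q * U := Dvd.dvd.mul_right (dvd_mul_left q p) U
        have : q ∣ 1 := by
          have := Nat.dvd_sub (hc.trans hdvdsum) h2
          simpa using this
        exact absurd (Nat.dvd_one.mp this) (by omega)
    set d := l.dropLast with hd
    have hld : d ++ [1] = l := by rw [hd, ← hlast]; exact List.dropLast_append_getLast hne
    refine ⟨d, ⟨?_, ?_, ?_⟩, ?_⟩
    · intro x hx
      exact hparts x (by rw [← hld]; exact List.mem_append_left _ hx)
    · exact chain'_iff.mpr (hchain.sublist (List.dropLast_sublist l))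
    · have : d.sum + 1 = p * q * U + 1 := by rw [← hsum, ← hld]; simp
      omega
    · rw [← hld]; simp
  · rintro ⟨m, hm, rfl⟩
    have h1 : 1 ∉ m := one_not_mem hp hq hpq hU hm
    obtain ⟨hparts, hchain, hsum⟩ := hm
    rw [chain'_iff] at hchain
    refine ⟨m ++ [1], ⟨?_, ?_, ?_⟩, by simp⟩
    · intro x hx
      rcases List.mem_append.mp hx with hx | hx
      · exact hparts x hx
      · exact ⟨0, 0, by simpa using List.mem_singleton.mp hx⟩
    · rw [chain'_iff, List.pairwise_append]
      refine ⟨hchain, List.pairwise_singleton _ _, ?_⟩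
      intro x hx y hy
      rw [List.mem_singleton] at hy
      subst hy
      have hxpos : 0 < x := part_pos hp hq (hparts x hx)
      have hx1 : x ≠ 1 := fun h => h1 (h ▸ hx)
      exact ⟨one_dvd _, by omega⟩
    · rw [List.sum_append, hsum]; simp

end SCAux

theorem sigma_rec (p q : ℕ) (hp : 1 < p) (hq : 1 < q) (hpq : Nat.Coprime p q)
    (U : ℕ) (hU : 1 ≤ U) (h : (Omega p q (p * q * U)).Nonempty) :
    ((Omega p q (p * U)).Nonempty ∨ (Omega p q (q * U)).Nonempty) ∧
    ((Omega p q (p * U)).Nonempty → (Omega p q (q * U)).Nonempty →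
      sigmaMin p q (p * q * U) = min (sigmaMin p q (p * U)) (sigmaMin p q (q * U))) ∧
    ((Omega p q (p * U)).Nonempty → ¬ (Omega p q (q * U)).Nonempty →
      sigmaMin p q (p * q * U) = sigmaMin p q (p * U)) ∧
    (¬ (Omega p q (p * U)).Nonempty → (Omega p q (q * U)).Nonempty →
      sigmaMin p q (p * q * U) = sigmaMin p q (q * U)) ∧
    (Omega p q (p * q * U + 1)).Nonempty ∧
    sigmaMin p q (p * q * U + 1) = 1 + sigmaMin p q (p * q * U) := by
  classical
  set A : Set ℕ := {n | ∃ l ∈ Omega p q (p * U), l.length = n} with hA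
  set B : Set ℕ := {n | ∃ l ∈ Omega p q (q * U), l.length = n} with hB
  set C : Set ℕ := {n | ∃ l ∈ Omega p q (p * q * U), l.length = n} with hC
  have hCAB : C = A ∪ B := by
    ext n
    simpa [hA, hB, hC, Set.mem_union] using SCAux.key1 hp hq hpq hU n
  have hAiff : (Omega p q (p * U)).Nonempty ↔ A.Nonempty := by
    constructor
    · rintro ⟨l, hl⟩; exact ⟨l.length, l, hl, rfl⟩
    · rintro ⟨n, l, hl, _⟩; exact ⟨l, hl⟩
  have hBiff : (Omega p q (q * U)).Nonempty ↔ B.Nonempty := by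
    constructor
    · rintro ⟨l, hl⟩; exact ⟨l.length, l, hl, rfl⟩
    · rintro ⟨n, l, hl, _⟩; exact ⟨l, hl⟩
  have hCne : C.Nonempty := by
    obtain ⟨l, hl⟩ := h; exact ⟨l.length, l, hl, rfl⟩
  have hsC : sigmaMin p q (p * q * U) = sInf C := rfl
  have hsA : sigmaMin p q (p * U) = sInf A := rfl
  have hsB : sigmaMin p q (q * U) = sInf B := rfl
  refine ⟨?_, ?_, ?_, ?_, ?_, ?_⟩
  · -- nonemptiness
    obtain ⟨n, hn⟩ := hCne
    rw [hCAB] at hn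
    rcases hn with hn | hn
    · exact Or.inl (hAiff.mpr ⟨n, hn⟩)
    · exact Or.inr (hBiff.mpr ⟨n, hn⟩)
  · intro hA' hB'
    replace hA' := hAiff.mp hA'
    replace hB' := hBiff.mp hB'
    rw [hsC, hsA, hsB, hCAB]
    apply le_antisymm
    · refine le_min (Nat.sInf_le ?_) (Nat.sInf_le ?_)
      · exact Or.inl (Nat.sInf_mem hA')
      · exact Or.inr (Nat.sInf_mem hB')
    · have : sInf (A ∪ B) ∈ A ∪ B := Nat.sInf_mem (hA'.mono Set.subset_union_left)
      rcases this with hm | hm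
      · exact le_trans (min_le_left _ _) (Nat.sInf_le hm)
      · exact le_trans (min_le_right _ _) (Nat.sInf_le hm)
  · intro hA' hB'
    have hBe : B = ∅ := by
      rw [Set.eq_empty_iff_forall_notMem]
      intro n hn
      exact hB' (hBiff.mpr ⟨n, hn⟩)
    rw [hsC, hsA, hCAB, hBe, Set.union_empty]
  · intro hA' hB'
    have hAe : A = ∅ := by
      rw [Set.eq_empty_iff_forall_notMem]
      intro n hn
      exact hA' (hAiff.mpr ⟨n, hn⟩)
    rw [hsC, hsB, hCAB, hAe, Set.empty_union]
  · obtain ⟨l, hl⟩ := h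
    obtain ⟨l', hl', _⟩ := (SCAux.key2 hp hq hpq hU (l.length + 1)).mpr ⟨l, hl, rfl⟩
    exact ⟨l', hl'⟩
  · set D : Set ℕ := {n | ∃ l ∈ Omega p q (p * q * U + 1), l.length = n} with hD
    have hsD : sigmaMin p q (p * q * U + 1) = sInf D := rfl
    have hDC : D = (· + 1) '' C := by
      ext n
      rw [hD, Set.mem_setOf_eq, SCAux.key2 hp hq hpq hU n]
      constructor
      · rintro ⟨m, hm, hmn⟩; exact ⟨m.length, ⟨m, hm, rfl⟩, hmn⟩
      · rintro ⟨k, ⟨m, hm, rfl⟩, hmn⟩; exact ⟨m, hm, hmn⟩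
    rw [hsD, hsC, hDC]
    have hmem : sInf C ∈ C := Nat.sInf_mem hCne
    apply le_antisymm
    · exact Nat.sInf_le ⟨sInf C, hmem, Nat.add_comm (sInf C) 1⟩
    · have hmm : sInf ((· + 1) '' C) ∈ (· + 1) '' C :=
        Nat.sInf_mem (hCne.image _)
      obtain ⟨k, hk, hk1⟩ := hmm
      have hk1' : k + 1 = sInf ((· + 1) '' C) := by simpa using hk1
      have := Nat.sInf_le hk
      omega
end

section
/- Let k₀ ∈ {1,…,q−1} be the inverse of p modulo q and ℓ₀ ∈ {1,…,p−1} be the inverse of q modulo p. Then for every nonnegative integer U and every integer r with 1 < r < pq: if r = k₀p then W(pqU+r) = W(qU+k₀) + W(pU+p−ℓ₀); if r = ℓ₀q then W(pqU+r) = W(pU+ℓ₀) + W(qU+q−k₀); if r = kp for some integer 1 ≤ k < q with k ≠ k₀, or r = kp+1 for some integer 1 ≤ k < q with k ≠ q−k₀, then W(pqU+r) = W(qU+k); if r = ℓq for some integer 1 ≤ ℓ < p with ℓ ≠ ℓ₀, or r = ℓq+1 for some integer 1 ≤ ℓ < p with ℓ ≠ p−ℓ₀, then W(pqU+r) = W(pU+ℓ);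 in all remaining cases W(pqU+r) = 0. -/
namespace SCPAux

instance : IsTrans ℕ (fun x y : ℕ => y ∣ x ∧ y < x) :=
  ⟨fun _ _ _ h h' => ⟨h'.1.trans h.1, h'.2.trans h.2⟩⟩

instance : IsAntisymm ℕ (fun x y : ℕ => y ∣ x ∧ y < x) :=
  ⟨fun _ _ hab hba => (lt_asymm hab.2 hba.2).elim⟩

lemma part_pos {p q x : ℕ} (hp : 0 < p) (hq : 0 < q) (h : ∃ a b : ℕ, x = p ^ a * q ^ b) :
    0 < x := by
  obtain ⟨a, b, rfl⟩ := h
  positivity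

lemma omega_pairwise {l : List ℕ} (h : List.Chain' (fun x y => y ∣ x ∧ y < x) l) :
    l.Pairwise (fun x y => y ∣ x ∧ y < x) :=
  List.isChain_iff_pairwise.mp h

lemma omega_finite {p q : ℕ} (hp : 0 < p) (hq : 0 < q) (U : ℕ) : (Omega p q U).Finite := by
  apply Set.Finite.of_finite_image (f := fun l : List ℕ => (l : Multiset ℕ))
  · apply Set.Finite.subset (Set.finite_range fun P : Nat.Partition U => P.parts)
    rintro m ⟨l, hl, rfl⟩
    obtain ⟨h1, h2, h3⟩ := hl
    exact ⟨⟨(l : Multiset ℕ), fun {i} hi => part_pos hp hq (h1 i (by exact_mod_cast hi)),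
      by simpa using h3⟩, rfl⟩
  · intro l1 h1 l2 h2 h
    rw [Multiset.coe_eq_coe] at h
    exact List.Perm.eq_of_pairwise (fun _ _ _ _ hab hba => (lt_asymm hab.2 hba.2).elim) (omega_pairwise h1.2.1) (omega_pairwise h2.2.1) h

lemma omegaStar_subset {p q U : ℕ} : OmegaStar p q U ⊆ Omega p q U := fun _ h => h.1

lemma omegaStar_finite {p q : ℕ} (hp : 0 < p) (hq : 0 < q) (U : ℕ) :
    (OmegaStar p q U).Finite :=
  (omega_finite hp hq U).subset omegaStar_subset

lemma Omega_comm (p q U : ℕ) : Omega p q U = Omega q p U := by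
  ext l
  simp only [Omega, IsSCPartition, Set.mem_setOf_eq]
  constructor <;> rintro ⟨h1, h2, h3⟩ <;>
    exact ⟨fun x hx => by obtain ⟨a, b, rfl⟩ := h1 x hx; exact ⟨b, a, mul_comm _ _⟩, h2, h3⟩

lemma OmegaStar_comm (p q U : ℕ) : OmegaStar p q U = OmegaStar q p U := by
  unfold OmegaStar IsSCPartition
  ext l
  constructor <;> rintro ⟨⟨h1, h2, h3⟩, h4⟩ <;>
    exact ⟨⟨fun x hx => by obtain ⟨a, b, rfl⟩ := h1 x hx; exact ⟨b, a, mul_comm _ _⟩, h2, h3⟩, h4⟩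

lemma W_comm (p q U : ℕ) : W p q U = W q p U := by unfold W; rw [Omega_comm]

lemma Wstar_comm (p q U : ℕ) : Wstar p q U = Wstar q p U := by unfold Wstar; rw [OmegaStar_comm]

lemma getLast_dvd {l : List ℕ} (hc : List.Chain' (fun x y => y ∣ x ∧ y < x) l)
    (h : l ≠ []) : ∀ x ∈ l, l.getLast h ∣ x := by
  have hpw := omega_pairwise hc
  conv at hpw => rw [← List.dropLast_append_getLast h]
  rw [List.pairwise_append] at hpw
  intro x hx
  conv at hx => rw [← List.dropLast_append_getLast h]
  rw [List.mem_append, List.mem_singleton] at hx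
  rcases hx with hx | rfl
  · exact (hpw.2.2 x hx _ (List.mem_singleton_self _)).1
  · exact dvd_rfl

lemma dropLast_rel {l : List ℕ} (hc : List.Chain' (fun x y => y ∣ x ∧ y < x) l)
    (h : l ≠ []) : ∀ x ∈ l.dropLast, l.getLast h ∣ x ∧ l.getLast h < x := by
  have hpw := omega_pairwise hc
  conv at hpw => rw [← List.dropLast_append_getLast h]
  rw [List.pairwise_append] at hpw
  exact fun x hx => hpw.2.2 x hx _ (List.mem_singleton_self _)

/-- Splitting: partitions of `N` are those without a `1` plus those ending in `1`. -/
lemma omega_split {p q N : ℕ} (hp : 1 < p) (hq : 1 < q) (hN : 0 < N) :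
    Omega p q N = OmegaStar p q N ∪ ((· ++ [1]) '' OmegaStar p q (N - 1)) := by
  ext l
  constructor
  · intro hl
    obtain ⟨h1, h2, h3⟩ := hl
    by_cases hone : (1 : ℕ) ∈ l
    · right
      have hne : l ≠ [] := by rintro rfl; simp at hone
      have hlast : l.getLast hne = 1 := by
        conv at hone => rw [← List.dropLast_append_getLast hne]
        rw [List.mem_append, List.mem_singleton] at hone
        rcases hone with hone | hone
        · have := (dropLast_rel h2 hne 1 hone).2
          have := part_pos (by omega : 0 < p) (by omega : 0 < q)
            (h1 _ (List.getLast_mem hne))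
          omega
        · exact hone.symm
      refine ⟨l.dropLast, ⟨⟨?_, ?_, ?_⟩, ?_⟩, ?_⟩
      · exact fun x hx => h1 x (List.dropLast_subset l hx)
      · exact h2.prefix (List.dropLast_prefix l)
      · have := List.dropLast_append_getLast hne
        rw [hlast] at this
        have hs : l.dropLast.sum + 1 = N := by
          rw [← h3]; conv_rhs => rw [← this]
          simp
        omega
      · intro hmem
        have := (dropLast_rel h2 hne 1 hmem).2
        rw [hlast] at this; omega
      · have := List.dropLast_append_getLast hne
        rw [hlast] at this
        exact this
    · exact Or.inl ⟨⟨h1, h2, h3⟩, hone⟩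
  · rintro (⟨hl, _⟩ | ⟨l', ⟨⟨h1, h2, h3⟩, h4⟩, rfl⟩)
    · exact hl
    · refine ⟨?_, ?_, ?_⟩
      · intro x hx
        rw [List.mem_append, List.mem_singleton] at hx
        rcases hx with hx | rfl
        · exact h1 x hx
        · exact ⟨0, 0, by simp⟩
      · unfold List.Chain'
        rw [List.isChain_append]
        refine ⟨h2, List.isChain_singleton 1, ?_⟩
        intro x hx y hy
        simp only [List.head?_cons, Option.mem_def, Option.some.injEq] at hy
        subst hy
        have hxl : x ∈ l' := List.mem_of_mem_getLast? hx
        have hpos := part_pos (by omega : 0 < p) (by omega : 0 < q) (h1 x hxl)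
        have hx1 : x ≠ 1 := fun h => h4 (h ▸ hxl)
        exact ⟨one_dvd x, by omega⟩
      · simp [h3]; omega

lemma append_one_injective : Function.Injective (fun l : List ℕ => l ++ [1]) := by
  intro a b h
  simpa using h

lemma W_split {p q N : ℕ} (hp : 1 < p) (hq : 1 < q) (hN : 0 < N) :
    W p q N = Wstar p q N + Wstar p q (N - 1) := by
  unfold W Wstar
  rw [omega_split hp hq hN]
  rw [Set.ncard_union_eq ?_ (omegaStar_finite (by omega) (by omega) N)
      ((omegaStar_finite (by omega) (by omega) (N-1)).image _),
    Set.ncard_image_of_injective _ append_one_injective]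
  rw [Set.disjoint_left]
  rintro l ⟨_, hone⟩ ⟨l', _, rfl⟩
  exact hone (by simp)

/-- If `N > 0` is divisible by neither `p` nor `q`, there are no 1-free partitions. -/
lemma omegaStar_empty {p q N : ℕ} (hp : 1 < p) (hq : 1 < q) (hN : 0 < N)
    (h1 : ¬ p ∣ N) (h2 : ¬ q ∣ N) : OmegaStar p q N = ∅ := by
  ext l
  simp only [Set.mem_empty_iff_false, iff_false]
  rintro ⟨⟨hparts, hchain, hsum⟩, hone⟩
  have hne : l ≠ [] := by rintro rfl; simp at hsum; omega
  set m := l.getLast hne with hm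
  have hmem : m ∈ l := List.getLast_mem hne
  obtain ⟨a, b, hab⟩ := hparts m hmem
  have hdvdN : m ∣ N := by
    rw [← hsum]
    exact List.dvd_sum (getLast_dvd hchain hne)
  have hm1 : m ≠ 1 := fun h => hone (h ▸ hmem)
  rcases Nat.eq_zero_or_pos a with ha | ha
  · rcases Nat.eq_zero_or_pos b with hb | hb
    · rw [ha, hb] at hab; simp at hab; exact hm1 hab
    · apply h2
      have : q ∣ m := by
        rw [hab, ha]; simp
        exact Or.inl (by omega)
      exact this.trans hdvdN
  · apply h1
    have : p ∣ m := by
      rw [hab]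
      exact Dvd.dvd.mul_right (dvd_pow_self p (by omega)) _
    exact this.trans hdvdN

lemma Wstar_eq_zero {p q N : ℕ} (hp : 1 < p) (hq : 1 < q) (hN : 0 < N)
    (h1 : ¬ p ∣ N) (h2 : ¬ q ∣ N) : Wstar p q N = 0 := by
  unfold Wstar
  rw [omegaStar_empty hp hq hN h1 h2]
  simp

lemma sum_map_mul (p : ℕ) (l : List ℕ) : (l.map (fun x => p * x)).sum = p * l.sum := by
  induction l with
  | nil => simp
  | cons a t ih => simp [ih, mul_add]

/-- If `p ∣ N` but `q ∤ N`, 1-free partitions of `N` are `p` times partitions of `N/p`. -/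
lemma omegaStar_p {p q N : ℕ} (hp : 1 < p) (hq : 1 < q) (hpq : Nat.Coprime p q)
    (hd : p ∣ N) (hnd : ¬ q ∣ N) :
    OmegaStar p q N = (List.map (fun x => p * x)) '' Omega p q (N / p) := by
  have hp0 : (0:ℕ) < p := by omega
  have hN : N ≠ 0 := by rintro rfl; exact hnd (dvd_zero q)
  ext l
  constructor
  · rintro ⟨⟨hparts, hchain, hsum⟩, hone⟩
    have hne : l ≠ [] := by rintro rfl; simp at hsum; omega
    set m := l.getLast hne with hm
    have hmem : m ∈ l := List.getLast_mem hne
    obtain ⟨a, b, hab⟩ := hparts m hmem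
    have hm1 : m ≠ 1 := fun h => hone (h ▸ hmem)
    have hdvdN : m ∣ N := by
      rw [← hsum]; exact List.dvd_sum (getLast_dvd hchain hne)
    have hpm : p ∣ m := by
      rcases Nat.eq_zero_or_pos a with ha | ha
      · exfalso
        rcases Nat.eq_zero_or_pos b with hb | hb
        · rw [ha, hb] at hab; simp at hab; exact hm1 hab
        · apply hnd
          have : q ∣ m := by
            rw [hab, ha]; simp
            exact Or.inl (by omega)
          exact this.trans hdvdN
      · rw [hab]
        exact Dvd.dvd.mul_right (dvd_pow_self p (by omega)) _
    have hpall : ∀ x ∈ l, p ∣ x := fun x hx => hpm.trans (getLast_dvd hchain hne x hx)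
    have hmap : List.map (fun x => p * x) (List.map (fun x => x / p) l) = l := by
      rw [List.map_map]
      conv_rhs => rw [← List.map_id l]
      exact List.map_congr_left (fun x hx => Nat.mul_div_cancel' (hpall x hx))
    refine ⟨l.map (fun x => x / p), ⟨?_, ?_, ?_⟩, hmap⟩
    · intro x hx
      rw [List.mem_map] at hx
      obtain ⟨y, hy, rfl⟩ := hx
      obtain ⟨a', b', rfl⟩ := hparts y hy
      have hpy : p ∣ p ^ a' * q ^ b' := hpall _ hy
      have ha' : a' ≠ 0 := by
        intro h0
        rw [h0, pow_zero, one_mul] at hpy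
        have := Nat.Coprime.eq_one_of_dvd (hpq.pow_right b') hpy
        omega
      refine ⟨a' - 1, b', ?_⟩
      rw [show p ^ a' = p * p ^ (a' - 1) by
        rw [← pow_succ']; congr 1; omega]
      rw [mul_assoc, Nat.mul_div_cancel_left _ hp0]
    · have hc2 := hchain
      unfold List.Chain' at hc2
      rw [← hmap, List.isChain_map] at hc2
      exact hc2.imp (fun a b hab => ⟨(mul_dvd_mul_iff_left (by omega : p ≠ 0)).mp hab.1,
        lt_of_mul_lt_mul_left hab.2 (by omega)⟩)
    · have h2 : p * (l.map (fun x => x / p)).sum = N := by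
        rw [← sum_map_mul, hmap, hsum]
      rw [← h2, Nat.mul_div_cancel_left _ hp0]
  · rintro ⟨l', ⟨hparts, hchain, hsum⟩, rfl⟩
    refine ⟨⟨?_, ?_, ?_⟩, ?_⟩
    · intro x hx
      rw [List.mem_map] at hx
      obtain ⟨y, hy, rfl⟩ := hx
      obtain ⟨a, b, rfl⟩ := hparts y hy
      exact ⟨a + 1, b, by ring⟩
    · unfold List.Chain'
      rw [List.isChain_map]
      apply hchain.imp
      intro a b hab
      exact ⟨mul_dvd_mul_left p hab.1, (mul_lt_mul_iff_right₀ hp0).mpr hab.2⟩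
    · rw [sum_map_mul, hsum, Nat.mul_div_cancel' hd]
    · intro hmem
      rw [List.mem_map] at hmem
      obtain ⟨y, hy, hy1⟩ := hmem
      have hypos := part_pos (by omega : 0 < p) (by omega : 0 < q) (hparts y hy)
      have : p * y ≥ p * 1 := Nat.mul_le_mul_left p hypos
      omega

lemma Wstar_p {p q N : ℕ} (hp : 1 < p) (hq : 1 < q) (hpq : Nat.Coprime p q)
    (hd : p ∣ N) (hnd : ¬ q ∣ N) : Wstar p q N = W p q (N / p) := by
  unfold Wstar W
  rw [omegaStar_p hp hq hpq hd hnd,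
    Set.ncard_image_of_injective _ (List.map_injective_iff.mpr
      (fun a b h => by exact Nat.eq_of_mul_eq_mul_left (by omega) h))]

lemma Wstar_q {p q N : ℕ} (hp : 1 < p) (hq : 1 < q) (hpq : Nat.Coprime p q)
    (hd : q ∣ N) (hnd : ¬ p ∣ N) : Wstar p q N = W p q (N / q) := by
  rw [Wstar_comm, W_comm]
  exact Wstar_p hq hp hpq.symm hd hnd


lemma key_identity {p q k₀ ℓ₀ : ℕ} (hp : 1 < p) (hq : 1 < q) (hpq : Nat.Coprime p q)
    (hk₀1 : 1 ≤ k₀) (hk₀2 : k₀ < q) (hk₀ : (p * k₀) % q = 1)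
    (hℓ₀1 : 1 ≤ ℓ₀) (hℓ₀2 : ℓ₀ < p) (hℓ₀ : (q * ℓ₀) % p = 1) :
    p * k₀ + q * ℓ₀ = p * q + 1 := by
  have h1 : q ∣ p * k₀ - 1 := by
    have := Nat.dvd_sub_mod (n := q) (p * k₀); rwa [hk₀] at this
  have h2 : p ∣ q * ℓ₀ - 1 := by
    have := Nat.dvd_sub_mod (n := p) (q * ℓ₀); rwa [hℓ₀] at this
  have hA : 0 < p * k₀ := Nat.mul_pos (by omega) hk₀1
  have hB : 0 < q * ℓ₀ := Nat.mul_pos (by omega) hℓ₀1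
  have hqX : q ∣ p * k₀ + q * ℓ₀ - 1 := by
    have := dvd_add h1 (dvd_mul_right q ℓ₀)
    rwa [show p * k₀ - 1 + q * ℓ₀ = p * k₀ + q * ℓ₀ - 1 by omega] at this
  have hpX : p ∣ p * k₀ + q * ℓ₀ - 1 := by
    have := dvd_add h2 (dvd_mul_right p k₀)
    rwa [show q * ℓ₀ - 1 + p * k₀ = p * k₀ + q * ℓ₀ - 1 by omega] at this
  obtain ⟨c, hc⟩ := hpq.mul_dvd_of_dvd_of_dvd hpX hqX
  have hb1 : p * (k₀ + 1) ≤ p * q := Nat.mul_le_mul_left p (by omega)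
  have hb2 : q * (ℓ₀ + 1) ≤ q * p := Nat.mul_le_mul_left q (by omega)
  have he1 : p * (k₀ + 1) = p * k₀ + p := by ring
  have he2 : q * (ℓ₀ + 1) = q * ℓ₀ + q := by ring
  have hcomm : q * p = p * q := mul_comm q p
  have hc1 : c = 1 := by
    rcases Nat.lt_or_ge c 2 with h | h
    · have : c ≠ 0 := by
        rintro rfl
        rw [Nat.mul_zero] at hc
        omega
      omega
    · exfalso
      have h3 : p * q * 2 ≤ p * q * c := Nat.mul_le_mul_left (p * q) h
      have h4 : p * q * 2 = p * q + p * q := by ring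
      omega
  rw [hc1, mul_one] at hc
  omega

lemma inv_unique {p q c : ℕ} (hq : 1 < q) (hpq : Nat.Coprime p q) {k k' : ℕ}
    (hk : k < q) (hk' : k' < q) (h1 : q ∣ k * p + c) (h2 : q ∣ k' * p + c) : k = k' := by
  have H : ∀ a b : ℕ, a ≤ b → b < q → q ∣ a * p + c → q ∣ b * p + c → b = a := by
    intro a b hab hbq ha hb
    have hmul : a * p ≤ b * p := Nat.mul_le_mul_right p hab
    have hd : q ∣ (b - a) * p := by
      have := Nat.dvd_sub hb ha
      rwa [show b * p + c - (a * p + c) = (b - a) * p from by rw [Nat.sub_mul]; omega] at this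
    have hd2 : q ∣ b - a := hpq.symm.dvd_of_dvd_mul_right hd
    have := Nat.eq_zero_of_dvd_of_lt hd2
    rcases Nat.eq_zero_or_pos (b - a) with h | h
    · omega
    · exact absurd (Nat.le_of_dvd h hd2) (by omega)
  rcases le_total k k' with h | h
  · exact (H k k' h hk' h1 h2).symm
  · exact H k' k h hk h2 h1

lemma k_eq_of_dvd {p q k₀ : ℕ} (hp : 1 < p) (hq : 1 < q) (hpq : Nat.Coprime p q)
    (hk₀1 : 1 ≤ k₀) (hk₀2 : k₀ < q) (hk₀ : (p * k₀) % q = 1)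
    (k : ℕ) (hk1 : 1 ≤ k) (hk2 : k < q) (h : q ∣ k * p - 1) : k = k₀ := by
  have h0 : q ∣ p * k₀ - 1 := by
    have := Nat.dvd_sub_mod (n := q) (p * k₀); rwa [hk₀] at this
  have hA : 0 < p * k₀ := Nat.mul_pos (by omega) hk₀1
  have hB : 0 < k * p := Nat.mul_pos hk1 (by omega)
  have hcomm : p * k₀ = k₀ * p := mul_comm p k₀
  apply inv_unique (c := q - 1) hq hpq hk2 hk₀2
  · have := dvd_add h (dvd_refl q)
    rwa [show k * p - 1 + q = k * p + (q - 1) by omega] at this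
  · have := dvd_add h0 (dvd_refl q)
    rwa [show p * k₀ - 1 + q = k₀ * p + (q - 1) by omega] at this

lemma Wstar_kp {p q : ℕ} (hp : 1 < p) (hq : 1 < q) (hpq : Nat.Coprime p q) (U k : ℕ)
    (hk1 : 1 ≤ k) (hk2 : k < q) :
    Wstar p q (p * q * U + k * p) = W p q (q * U + k) := by
  have hd : p ∣ p * q * U + k * p := ⟨q * U + k, by ring⟩
  have hnd : ¬ q ∣ p * q * U + k * p := by
    intro h
    have h2 : q ∣ k * p := (Nat.dvd_add_right ⟨p * U, by ring⟩).mp h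
    have h3 : q ∣ k := hpq.symm.dvd_of_dvd_mul_right h2
    exact absurd (Nat.le_of_dvd (by omega) h3) (by omega)
  rw [Wstar_p hp hq hpq hd hnd, show p * q * U + k * p = p * (q * U + k) by ring,
    Nat.mul_div_cancel_left _ (by omega : 0 < p)]

lemma branch_eq {p q k₀ ℓ₀ : ℕ} (hp : 1 < p) (hq : 1 < q) (hpq : Nat.Coprime p q)
    (hk₀1 : 1 ≤ k₀) (hk₀2 : k₀ < q) (hk₀ : (p * k₀) % q = 1)
    (hℓ₀1 : 1 ≤ ℓ₀) (hℓ₀2 : ℓ₀ < p) (hℓ₀ : (q * ℓ₀) % p = 1) (U : ℕ) :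
    W p q (p * q * U + k₀ * p) = W p q (q * U + k₀) + W p q (p * U + (p - ℓ₀)) := by
  have hkey := key_identity hp hq hpq hk₀1 hk₀2 hk₀ hℓ₀1 hℓ₀2 hℓ₀
  have hs : k₀ * p = q * (p - ℓ₀) + 1 := by
    have e : q * (p - ℓ₀) + q * ℓ₀ = q * p := by
      rw [← mul_add]; congr 1; omega
    have hcomm1 : p * k₀ = k₀ * p := mul_comm p k₀
    have hcomm2 : q * p = p * q := mul_comm q p
    omega
  have hkp : p ≤ k₀ * p := Nat.le_mul_of_pos_left p hk₀1
  have hN : 0 < p * q * U + k₀ * p := by omega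
  rw [W_split hp hq hN, Wstar_kp hp hq hpq U k₀ hk₀1 hk₀2]
  congr 1
  have hsub : p * q * U + k₀ * p - 1 = q * (p * U + (p - ℓ₀)) := by
    have e2 : q * (p * U + (p - ℓ₀)) = p * q * U + q * (p - ℓ₀) := by ring
    omega
  have hnp : ¬ p ∣ q * (p * U + (p - ℓ₀)) := by
    intro hdvd
    rw [← hsub] at hdvd
    have h2 : p ∣ p * q * U + k₀ * p := ⟨q * U + k₀, by ring⟩
    have h3 := Nat.dvd_sub h2 hdvd
    rw [show p * q * U + k₀ * p - (p * q * U + k₀ * p - 1) = 1 by omega] at h3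
    exact absurd (Nat.le_of_dvd one_pos h3) (by omega)
  rw [hsub, Wstar_q hp hq hpq ⟨_, rfl⟩ hnp, Nat.mul_div_cancel_left _ (by omega : 0 < q)]

lemma branch_ne {p q k₀ : ℕ} (hp : 1 < p) (hq : 1 < q) (hpq : Nat.Coprime p q)
    (hk₀1 : 1 ≤ k₀) (hk₀2 : k₀ < q) (hk₀ : (p * k₀) % q = 1)
    (U k : ℕ) (hk1 : 1 ≤ k) (hk2 : k < q) (hne : k ≠ k₀) :
    W p q (p * q * U + k * p) = W p q (q * U + k) := by
  have hkp : p ≤ k * p := Nat.le_mul_of_pos_left p hk1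
  rw [W_split hp hq (by omega), Wstar_kp hp hq hpq U k hk1 hk2]
  have h0 : Wstar p q (p * q * U + k * p - 1) = 0 := by
    apply Wstar_eq_zero hp hq (by omega)
    · intro h
      have h2 : p ∣ p * q * U + k * p := ⟨q * U + k, by ring⟩
      have h3 := Nat.dvd_sub h2 h
      rw [show p * q * U + k * p - (p * q * U + k * p - 1) = 1 by omega] at h3
      exact absurd (Nat.le_of_dvd one_pos h3) (by omega)
    · intro h
      have hq1 : q ∣ p * q * U := ⟨p * U, by ring⟩
      have h2 := Nat.dvd_sub h hq1
      rw [show p * q * U + k * p - 1 - p * q * U = k * p - 1 by omega] at h2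
      exact hne (k_eq_of_dvd hp hq hpq hk₀1 hk₀2 hk₀ k hk1 hk2 h2)
  omega

lemma branch_plus {p q k₀ : ℕ} (hp : 1 < p) (hq : 1 < q) (hpq : Nat.Coprime p q)
    (hk₀1 : 1 ≤ k₀) (hk₀2 : k₀ < q) (hk₀ : (p * k₀) % q = 1)
    (U k : ℕ) (hk1 : 1 ≤ k) (hk2 : k < q) (hne : k ≠ q - k₀) :
    W p q (p * q * U + (k * p + 1)) = W p q (q * U + k) := by
  have hkp : p ≤ k * p := Nat.le_mul_of_pos_left p hk1
  have hN : 0 < p * q * U + (k * p + 1) := by omega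
  rw [W_split hp hq hN]
  have hz : Wstar p q (p * q * U + (k * p + 1)) = 0 := by
    apply Wstar_eq_zero hp hq hN
    · intro h
      have h2 : p ∣ p * q * U + k * p := ⟨q * U + k, by ring⟩
      have h3 := Nat.dvd_sub h h2
      rw [show p * q * U + (k * p + 1) - (p * q * U + k * p) = 1 by omega] at h3
      exact absurd (Nat.le_of_dvd one_pos h3) (by omega)
    · intro h
      have hq1 : q ∣ p * q * U := ⟨p * U, by ring⟩
      have h2 := Nat.dvd_sub h hq1
      rw [show p * q * U + (k * p + 1) - p * q * U = k * p + 1 by omega] at h2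
      have h0 : q ∣ p * k₀ - 1 := by
        have := Nat.dvd_sub_mod (n := q) (p * k₀); rwa [hk₀] at this
      have hqk : q ∣ (q - k₀) * p + 1 := by
        have hd2 := Nat.dvd_sub (⟨p, rfl⟩ : q ∣ q * p) h0
        have hA : 0 < p * k₀ := Nat.mul_pos (by omega) hk₀1
        have hcomm : p * k₀ = k₀ * p := mul_comm p k₀
        have hle : k₀ * p ≤ q * p := Nat.mul_le_mul_right p (by omega)
        rwa [show q * p - (p * k₀ - 1) = (q - k₀) * p + 1 from by rw [Nat.sub_mul]; omega] at hd2
      exact hne (inv_unique (c := 1) hq hpq hk2 (by omega) h2 hqk)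
  rw [hz, show p * q * U + (k * p + 1) - 1 = p * q * U + k * p by omega,
    Wstar_kp hp hq hpq U k hk1 hk2]
  omega

lemma branch_none {p q : ℕ} (hp : 1 < p) (hq : 1 < q) (U r : ℕ) (hr1 : 1 < r)
    (hpr : ¬ p ∣ r) (hpr1 : ¬ p ∣ r - 1) (hqr : ¬ q ∣ r) (hqr1 : ¬ q ∣ r - 1) :
    W p q (p * q * U + r) = 0 := by
  have hpd : p ∣ p * q * U := ⟨q * U, by ring⟩
  have hqd : q ∣ p * q * U := ⟨p * U, by ring⟩
  rw [W_split hp hq (by omega),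
    show p * q * U + r - 1 = p * q * U + (r - 1) by omega,
    Wstar_eq_zero hp hq (by omega)
      (fun h => hpr ((Nat.dvd_add_right hpd).mp h))
      (fun h => hqr ((Nat.dvd_add_right hqd).mp h)),
    Wstar_eq_zero hp hq (by omega)
      (fun h => hpr1 ((Nat.dvd_add_right hpd).mp h))
      (fun h => hqr1 ((Nat.dvd_add_right hqd).mp h))]

end SCPAux

theorem W_pqU_add_r (p q : ℕ) (hp : 1 < p) (hq : 1 < q) (hpq : Nat.Coprime p q)
    (k₀ ℓ₀ : ℕ) (hk₀1 : 1 ≤ k₀) (hk₀2 : k₀ < q) (hk₀ : (p * k₀) % q = 1)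
    (hℓ₀1 : 1 ≤ ℓ₀) (hℓ₀2 : ℓ₀ < p) (hℓ₀ : (q * ℓ₀) % p = 1)
    (U r : ℕ) (hr1 : 1 < r) (hr2 : r < p * q) :
    (r = k₀ * p →
      W p q (p * q * U + r) = W p q (q * U + k₀) + W p q (p * U + p - ℓ₀)) ∧
    (r = ℓ₀ * q →
      W p q (p * q * U + r) = W p q (p * U + ℓ₀) + W p q (q * U + q - k₀)) ∧
    (∀ k, 1 ≤ k → k < q → k ≠ k₀ → r = k * p →
      W p q (p * q * U + r) = W p q (q * U + k)) ∧
    (∀ k, 1 ≤ k → k < q → k ≠ q - k₀ → r = k * p + 1 →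
      W p q (p * q * U + r) = W p q (q * U + k)) ∧
    (∀ ℓ, 1 ≤ ℓ → ℓ < p → ℓ ≠ ℓ₀ → r = ℓ * q →
      W p q (p * q * U + r) = W p q (p * U + ℓ)) ∧
    (∀ ℓ, 1 ≤ ℓ → ℓ < p → ℓ ≠ p - ℓ₀ → r = ℓ * q + 1 →
      W p q (p * q * U + r) = W p q (p * U + ℓ)) ∧
    ((¬ ∃ k, r = k * p ∨ r = k * p + 1) → (¬ ∃ ℓ, r = ℓ * q ∨ r = ℓ * q + 1) →
      W p q (p * q * U + r) = 0) := by
  refine ⟨?_, ?_, ?_, ?_, ?_, ?_, ?_⟩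
  · rintro rfl
    rw [show p * U + p - ℓ₀ = p * U + (p - ℓ₀) from Nat.add_sub_assoc (by omega) (p * U)]
    exact SCPAux.branch_eq hp hq hpq hk₀1 hk₀2 hk₀ hℓ₀1 hℓ₀2 hℓ₀ U
  · rintro rfl
    rw [show q * U + q - k₀ = q * U + (q - k₀) from Nat.add_sub_assoc (by omega) (q * U),
      SCPAux.W_comm p q (p * q * U + ℓ₀ * q),
      show p * q * U + ℓ₀ * q = q * p * U + ℓ₀ * q by ring,
      SCPAux.branch_eq hq hp hpq.symm hℓ₀1 hℓ₀2 hℓ₀ hk₀1 hk₀2 hk₀ U,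
      SCPAux.W_comm q p (p * U + ℓ₀), SCPAux.W_comm q p (q * U + (q - k₀))]
  · rintro k hk1 hk2 hne rfl
    exact SCPAux.branch_ne hp hq hpq hk₀1 hk₀2 hk₀ U k hk1 hk2 hne
  · rintro k hk1 hk2 hne rfl
    exact SCPAux.branch_plus hp hq hpq hk₀1 hk₀2 hk₀ U k hk1 hk2 hne
  · rintro ℓ hl1 hl2 hne rfl
    rw [SCPAux.W_comm p q (p * q * U + ℓ * q),
      show p * q * U + ℓ * q = q * p * U + ℓ * q by ring,
      SCPAux.branch_ne hq hp hpq.symm hℓ₀1 hℓ₀2 hℓ₀ U ℓ hl1 hl2 hne,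
      SCPAux.W_comm q p (p * U + ℓ)]
  · rintro ℓ hl1 hl2 hne rfl
    rw [SCPAux.W_comm p q (p * q * U + (ℓ * q + 1)),
      show p * q * U + (ℓ * q + 1) = q * p * U + (ℓ * q + 1) by ring,
      SCPAux.branch_plus hq hp hpq.symm hℓ₀1 hℓ₀2 hℓ₀ U ℓ hl1 hl2 hne,
      SCPAux.W_comm q p (p * U + ℓ)]
  · intro h1 h2
    apply SCPAux.branch_none hp hq U r hr1
    · rintro ⟨c, rfl⟩
      exact h1 ⟨c, Or.inl (mul_comm p c)⟩
    · rintro ⟨c, hc⟩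
      refine h1 ⟨c, Or.inr ?_⟩
      have := mul_comm p c
      omega
    · rintro ⟨c, rfl⟩
      exact h2 ⟨c, Or.inl (mul_comm q c)⟩
    · rintro ⟨c, hc⟩
      refine h2 ⟨c, Or.inr ?_⟩
      have := mul_comm q c
      omega
end

section
/- Assume p = 2. Then for every nonnegative integer U and every integer r with 2 ≤ r ≤ q−1, W(qU+r) = W(⌊(qU+r)/2⌋). -/
/-- The last element of a strictly decreasing divisibility chain divides every element. -/
lemma chain_getLast_dvd :
    ∀ (l : List ℕ), List.Chain' (fun x y => y ∣ x ∧ y < x) l → ∀ (hne : l ≠ []),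
      ∀ x ∈ l, l.getLast hne ∣ x ∧ l.getLast hne ≤ x := by
  intro l
  induction l with
  | nil => intro _ hne; exact absurd rfl hne
  | cons a t ih =>
    intro h hne x hx
    cases t with
    | nil =>
      simp only [List.mem_singleton] at hx
      subst hx; simp
    | cons b t' =>
      have h1 : b ∣ a ∧ b < a := (List.isChain_cons_cons.mp h).1
      have h2 : List.Chain' (fun x y => y ∣ x ∧ y < x) (b :: t') := (List.isChain_cons_cons.mp h).2
      have hlast : (a :: b :: t').getLast hne = (b :: t').getLast (by simp) :=
        List.getLast_cons (by simp)
      rw [hlast]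
      rcases List.mem_cons.mp hx with rfl | hx'
      · have hb := ih h2 (by simp) b (by simp)
        exact ⟨hb.1.trans h1.1, le_trans hb.2 (le_of_lt h1.2)⟩
      · exact ih h2 (by simp) x hx'

/-- The last element is strictly smaller than every element of `dropLast`. -/
lemma chain_getLast_lt :
    ∀ (l : List ℕ), List.Chain' (fun x y => y ∣ x ∧ y < x) l → ∀ (hne : l ≠ []),
      ∀ x ∈ l.dropLast, l.getLast hne < x := by
  intro l
  induction l with
  | nil => intro _ hne; exact absurd rfl hne
  | cons a t ih =>
    intro h hne x hx
    cases t with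
    | nil => simp at hx
    | cons b t' =>
      have h1 : b ∣ a ∧ b < a := (List.isChain_cons_cons.mp h).1
      have h2 : List.Chain' (fun x y => y ∣ x ∧ y < x) (b :: t') := (List.isChain_cons_cons.mp h).2
      have hlast : (a :: b :: t').getLast hne = (b :: t').getLast (by simp) :=
        List.getLast_cons (by simp)
      rw [hlast]
      have hdl : (a :: b :: t').dropLast = a :: (b :: t').dropLast := by simp
      rw [hdl] at hx
      rcases List.mem_cons.mp hx with rfl | hx'
      · have hb := chain_getLast_dvd (b :: t') h2 (by simp) b (by simp)
        exact lt_of_le_of_lt hb.2 h1.2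
      · exact ih h2 (by simp) x hx'

lemma part_pos {q x : ℕ} (hq : 0 < q) (hx : ∃ a b : ℕ, x = 2 ^ a * q ^ b) : 0 < x := by
  obtain ⟨a, b, rfl⟩ := hx
  exact Nat.mul_pos (Nat.pow_pos (n := a) (by norm_num)) (Nat.pow_pos (n := b) hq)

lemma sum_map_two (l : List ℕ) : (l.map (fun x => 2 * x)).sum = 2 * l.sum := by
  induction l with
  | nil => simp
  | cons a t ih => simp [ih, Nat.mul_add]

lemma q_odd {q : ℕ} (hq2 : Nat.Coprime 2 q) : ¬ 2 ∣ q := by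
  intro h
  have h2 : (2:ℕ) ∣ Nat.gcd 2 q := Nat.dvd_gcd dvd_rfl h
  rw [hq2] at h2; omega

/-- Doubling bijection: `l ∈ Ω(M)` iff `2·l ∈ Ω*(2M)`. -/
lemma map_two_mem_iff {q M : ℕ} (hq : 1 < q) (hq2 : Nat.Coprime 2 q) (l : List ℕ) :
    l.map (fun x => 2 * x) ∈ OmegaStar 2 q (2 * M) ↔ l ∈ Omega 2 q M := by
  have hqodd := q_odd hq2
  constructor
  · rintro ⟨⟨hparts, hchain, hsum⟩, -⟩
    refine ⟨?_, ?_, ?_⟩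
    · intro x hx
      obtain ⟨a, b, hab⟩ := hparts (2 * x) (List.mem_map_of_mem hx)
      cases a with
      | zero =>
        exfalso
        simp only [pow_zero, one_mul] at hab
        have : ¬ 2 ∣ q ^ b := by
          intro h
          exact hqodd ((Nat.Prime.dvd_of_dvd_pow Nat.prime_two) h)
        exact this ⟨x, hab.symm⟩
      | succ a' =>
        refine ⟨a', b, ?_⟩
        have : 2 * x = 2 * (2 ^ a' * q ^ b) := by rw [hab, pow_succ]; ring
        omega
    · rw [List.Chain', List.isChain_map] at hchain
      refine List.IsChain.imp ?_ hchain
      intro a b hab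
      refine ⟨?_, by omega⟩
      exact (mul_dvd_mul_iff_left (by norm_num : (2:ℕ) ≠ 0)).mp hab.1
    · rw [sum_map_two] at hsum; omega
  · rintro ⟨hparts, hchain, hsum⟩
    refine ⟨⟨?_, ?_, ?_⟩, ?_⟩
    · intro x hx
      rw [List.mem_map] at hx
      obtain ⟨y, hy, rfl⟩ := hx
      obtain ⟨a, b, rfl⟩ := hparts y hy
      exact ⟨a + 1, b, by rw [pow_succ]; ring⟩
    · rw [List.Chain', List.isChain_map]
      refine List.IsChain.imp ?_ hchain
      intro a b hab
      exact ⟨mul_dvd_mul_left 2 hab.1, by omega⟩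
    · rw [sum_map_two, hsum]
    · simp only [List.mem_map]
      rintro ⟨y, -, hy⟩
      omega

/-- With `q ∤ N`, every part of a `1`-free partition of `N` is even. -/
lemma parts_even {q N : ℕ} (hq : 1 < q) (hNq : ¬ q ∣ N) {l : List ℕ}
    (hl : l ∈ OmegaStar 2 q N) : ∀ x ∈ l, 2 ∣ x := by
  obtain ⟨⟨hparts, hchain, hsum⟩, hone⟩ := hl
  have hne : l ≠ [] := by
    rintro rfl
    exact hNq (hsum ▸ dvd_zero q)
  set g := l.getLast hne with hg
  have hgl : g ∈ l := List.getLast_mem hne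
  obtain ⟨a, b, hab⟩ := hparts g hgl
  have hdvd := chain_getLast_dvd l hchain hne
  cases a with
  | zero =>
    exfalso
    simp only [pow_zero, one_mul] at hab
    cases b with
    | zero => simp at hab; exact hone (hab ▸ hgl)
    | succ b' =>
      apply hNq
      rw [← hsum]
      apply List.dvd_sum
      intro x hx
      exact dvd_trans (dvd_trans (dvd_pow_self q (Nat.succ_ne_zero b')) (hab ▸ dvd_rfl)) ((hdvd x hx).1)
  | succ a' =>
    intro x hx
    refine dvd_trans ?_ (hdvd x hx).1
    show 2 ∣ g
    rw [hab]
    exact dvd_mul_of_dvd_left (dvd_pow_self 2 (Nat.succ_ne_zero a')) _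

lemma omegaStar_empty {q N : ℕ} (hq : 1 < q) (hN2 : ¬ 2 ∣ N) (hNq : ¬ q ∣ N) :
    OmegaStar 2 q N = ∅ := by
  ext l
  simp only [Set.mem_empty_iff_false, iff_false]
  intro hl
  apply hN2
  rw [← hl.1.2.2]
  exact List.dvd_sum (parts_even hq hNq hl)

lemma omegaStar_image {q N : ℕ} (hq : 1 < q) (hq2 : Nat.Coprime 2 q)
    (hN2 : 2 ∣ N) (hNq : ¬ q ∣ N) :
    OmegaStar 2 q N = (List.map (fun x => 2 * x)) '' Omega 2 q (N / 2) := by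
  have h2 : 2 * (N / 2) = N := Nat.mul_div_cancel' hN2
  ext l
  constructor
  · intro hl
    have heven := parts_even hq hNq hl
    have hrepr : l = (l.map (fun x => x / 2)).map (fun x => 2 * x) := by
      rw [List.map_map]
      conv_lhs => rw [← List.map_id l]
      apply List.map_congr_left
      intro x hx
      simp only [Function.comp_apply, id_eq]
      exact (Nat.mul_div_cancel' (heven x hx)).symm
    refine ⟨l.map (fun x => x / 2), ?_, hrepr.symm⟩
    rw [← map_two_mem_iff hq hq2, ← hrepr, h2]
    exact hl
  · rintro ⟨l', hl', rfl⟩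
    rw [← h2]
    exact (map_two_mem_iff hq hq2 l').mpr hl'

/-- If `1 ∈ l` for `l ∈ Ω(N)`, then `l` ends in `1` and `dropLast l ∈ Ω*(N-1)`. -/
lemma one_mem_structure {q N : ℕ} (hq : 1 < q) {l : List ℕ}
    (hl : l ∈ Omega 2 q N) (hone : 1 ∈ l) :
    l = l.dropLast ++ [1] ∧ l.dropLast ∈ OmegaStar 2 q (N - 1) ∧ 1 ≤ N := by
  obtain ⟨hparts, hchain, hsum⟩ := hl
  have hne : l ≠ [] := by rintro rfl; simp at hone
  have hdvd := chain_getLast_dvd l hchain hne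
  have hlt := chain_getLast_lt l hchain hne
  have hg1 : l.getLast hne = 1 := Nat.dvd_one.mp (hdvd 1 hone).1
  have hrepr : l = l.dropLast ++ [1] := by
    conv_lhs => rw [← List.dropLast_append_getLast hne]
    rw [hg1]
  have hN1 : 1 ≤ N := by
    rw [← hsum, hrepr, List.sum_append]
    simp
  refine ⟨hrepr, ⟨⟨?_, ?_, ?_⟩, ?_⟩, hN1⟩
  · intro x hx
    exact hparts x ((List.dropLast_sublist l).subset hx)
  · rw [hrepr, List.Chain', List.isChain_append] at hchain
    exact hchain.1
  · have : l.sum = l.dropLast.sum + 1 := by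
      conv_lhs => rw [hrepr]
      rw [List.sum_append]; simp
    omega
  · intro hx
    have := hlt 1 hx
    rw [hg1] at this
    omega

lemma omega_eq_omegaStar {q N : ℕ} (hq : 1 < q) (hN2 : 2 ∣ N)
    (hNq : ¬ q ∣ N) (hN1q : ¬ q ∣ (N - 1)) :
    Omega 2 q N = OmegaStar 2 q N := by
  ext l
  constructor
  · intro hl
    refine ⟨hl, ?_⟩
    intro hone
    obtain ⟨-, hmem, hN1⟩ := one_mem_structure hq hl hone
    have hodd : ¬ 2 ∣ (N - 1) := by omega
    rw [omegaStar_empty hq hodd hN1q] at hmem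
    exact hmem
  · exact fun hl => hl.1

lemma omega_eq_append {q N : ℕ} (hq : 1 < q) (hq2 : Nat.Coprime 2 q)
    (hN2 : ¬ 2 ∣ N) (hNq : ¬ q ∣ N) :
    Omega 2 q N = (fun l => l ++ [1]) '' OmegaStar 2 q (N - 1) := by
  have hqodd := q_odd hq2
  ext l
  constructor
  · intro hl
    have hone : 1 ∈ l := by
      obtain ⟨hparts, hchain, hsum⟩ := hl
      have hne : l ≠ [] := by
        rintro rfl
        exact hNq (hsum ▸ dvd_zero q)
      have hdvd := chain_getLast_dvd l hchain hne
      obtain ⟨a, b, hab⟩ := hparts _ (List.getLast_mem hne)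
      cases a with
      | succ a' =>
        exfalso
        apply hN2
        rw [← hsum]
        apply List.dvd_sum
        intro x hx
        refine dvd_trans ?_ (hdvd x hx).1
        rw [hab]
        exact dvd_mul_of_dvd_left (dvd_pow_self 2 (Nat.succ_ne_zero a')) _
      | zero =>
        simp only [pow_zero, one_mul] at hab
        cases b with
        | zero =>
          simp only [pow_zero] at hab
          exact hab ▸ List.getLast_mem hne
        | succ b' =>
          exfalso
          apply hNq
          rw [← hsum]
          apply List.dvd_sum
          intro x hx
          exact dvd_trans (dvd_trans (dvd_pow_self q (Nat.succ_ne_zero b')) (hab ▸ dvd_rfl))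
            ((hdvd x hx).1)
    obtain ⟨hrepr, hmem, -⟩ := one_mem_structure hq hl hone
    exact ⟨l.dropLast, hmem, hrepr.symm⟩
  · rintro ⟨l', ⟨⟨hparts, hchain, hsum⟩, hone⟩, rfl⟩
    have hN1 : 1 ≤ N := by
      rcases Nat.eq_zero_or_pos N with h | h
      · exact absurd (h ▸ dvd_zero q) (h ▸ hNq)
      · exact h
    refine ⟨?_, ?_, ?_⟩
    · intro x hx
      rw [List.mem_append] at hx
      rcases hx with hx | hx
      · exact hparts x hx
      · simp only [List.mem_singleton] at hx
        exact ⟨0, 0, by simp [hx]⟩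
    · rw [List.Chain', List.isChain_append]
      refine ⟨hchain, List.isChain_singleton 1, ?_⟩
      intro x hx y hy
      simp only [List.head?_cons, Option.mem_def, Option.some.injEq] at hy
      subst hy
      have hxl : x ∈ l' := List.mem_of_mem_getLast? hx
      have hpos : 0 < x := part_pos (by omega) (hparts x hxl)
      have hx1 : x ≠ 1 := fun h => hone (h ▸ hxl)
      exact ⟨one_dvd x, by omega⟩
    · rw [List.sum_append]
      simp only [List.sum_cons, List.sum_nil]
      omega

lemma wstar_eq {q N : ℕ} (hq : 1 < q) (hq2 : Nat.Coprime 2 q)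
    (hN2 : 2 ∣ N) (hNq : ¬ q ∣ N) :
    Wstar 2 q N = W 2 q (N / 2) := by
  unfold Wstar W
  rw [omegaStar_image hq hq2 hN2 hNq]
  exact Set.ncard_image_of_injective _ (List.map_injective_iff.mpr (fun a b h => by omega))

theorem W_qU_add_r_p_eq_two (q : ℕ) (hq : 1 < q) (hq2 : Nat.Coprime 2 q)
    (U r : ℕ) (hr1 : 2 ≤ r) (hr2 : r ≤ q - 1) :
    W 2 q (q * U + r) = W 2 q ((q * U + r) / 2) := by
  have hqodd := q_odd hq2
  have hq3 : 3 ≤ q := by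
    rcases Nat.lt_or_ge q 3 with h | h
    · interval_cases q
      · exact absurd (dvd_refl 2) hqodd
    · exact h
  set N := q * U + r with hN
  have hrq : r < q := by omega
  have hNq : ¬ q ∣ N := by
    intro h
    have h0 : N % q = 0 := Nat.mod_eq_zero_of_dvd h
    rw [hN, Nat.mul_add_mod, Nat.mod_eq_of_lt hrq] at h0
    omega
  have hN1q : ¬ q ∣ (N - 1) := by
    intro h
    have h0 : (N - 1) % q = 0 := Nat.mod_eq_zero_of_dvd h
    have hrepr : N - 1 = q * U + (r - 1) := by omega
    rw [hrepr, Nat.mul_add_mod, Nat.mod_eq_of_lt (by omega : r - 1 < q)] at h0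
    omega
  rcases Nat.even_or_odd N with he | ho
  · have h2 : 2 ∣ N := he.two_dvd
    rw [show W 2 q N = (Omega 2 q N).ncard from rfl]
    rw [omega_eq_omegaStar hq h2 hNq hN1q]
    exact wstar_eq hq hq2 h2 hNq
  · have h2 : ¬ 2 ∣ N := by
      intro h
      exact (Nat.not_even_iff_odd.mpr ho) (even_iff_two_dvd.mpr h)
    have hN2 : 2 ≤ N := by omega
    have h2' : 2 ∣ (N - 1) := by
      obtain ⟨k, hk⟩ := ho
      omega
    have hdiv : N / 2 = (N - 1) / 2 := by omega
    rw [show W 2 q N = (Omega 2 q N).ncard from rfl]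
    rw [omega_eq_append hq hq2 h2 hNq]
    rw [Set.ncard_image_of_injective _ (fun a b h => by simpa using h : Function.Injective (fun l : List ℕ => l ++ [1]))]
    rw [hdiv]
    exact wstar_eq hq hq2 h2' hN1q
end

section
/- For (p,q) = (2,3) and every integer U ≥ 1, W(3U+1) = W(U) + W(3·⌊(U+1)/2⌋ − 1). -/
namespace SCAux

instance : IsTrans ℕ (fun x y : ℕ => y ∣ x ∧ y < x) :=
  ⟨fun _ _ _ hab hbc => ⟨hbc.1.trans hab.1, hbc.2.trans hab.2⟩⟩

lemma form_pos {x : ℕ} (h : ∃ a b : ℕ, x = 2 ^ a * 3 ^ b) : 1 ≤ x := by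
  obtain ⟨a, b, rfl⟩ := h
  exact Nat.one_le_iff_ne_zero.mpr (by positivity)

lemma form_mul_two {x : ℕ} (h : ∃ a b : ℕ, x = 2 ^ a * 3 ^ b) :
    ∃ a b : ℕ, 2 * x = 2 ^ a * 3 ^ b := by
  obtain ⟨a, b, rfl⟩ := h
  exact ⟨a + 1, b, by rw [pow_succ]; ring⟩

lemma form_mul_three {x : ℕ} (h : ∃ a b : ℕ, x = 2 ^ a * 3 ^ b) :
    ∃ a b : ℕ, 3 * x = 2 ^ a * 3 ^ b := by
  obtain ⟨a, b, rfl⟩ := h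
  exact ⟨a, b + 1, by rw [pow_succ]; ring⟩

lemma form_of_two_mul {x : ℕ} (h : ∃ a b : ℕ, 2 * x = 2 ^ a * 3 ^ b) :
    ∃ a b : ℕ, x = 2 ^ a * 3 ^ b := by
  obtain ⟨a, b, hab⟩ := h
  cases a with
  | zero =>
    exfalso
    have h2 : (2 : ℕ) ∣ 3 ^ b := ⟨x, by simpa using hab.symm⟩
    have := Nat.Prime.dvd_of_dvd_pow Nat.prime_two h2
    omega
  | succ a =>
    have h2 : 2 * x = 2 * (2 ^ a * 3 ^ b) := by rw [hab, pow_succ]; ring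
    exact ⟨a, b, by omega⟩

lemma form_of_three_mul {x : ℕ} (h : ∃ a b : ℕ, 3 * x = 2 ^ a * 3 ^ b) :
    ∃ a b : ℕ, x = 2 ^ a * 3 ^ b := by
  obtain ⟨a, b, hab⟩ := h
  cases b with
  | zero =>
    exfalso
    have h2 : (3 : ℕ) ∣ 2 ^ a := ⟨x, by simpa using hab.symm⟩
    have := Nat.Prime.dvd_of_dvd_pow Nat.prime_three h2
    omega
  | succ b =>
    have h2 : 3 * x = 3 * (2 ^ a * 3 ^ b) := by rw [hab, pow_succ]; ring
    exact ⟨a, b, by omega⟩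

/-- If a part is odd and not `1`, it is divisible by 3. -/
lemma form_three_dvd {x : ℕ} (h : ∃ a b : ℕ, x = 2 ^ a * 3 ^ b) (hodd : ¬ 2 ∣ x)
    (hne : x ≠ 1) : 3 ∣ x := by
  obtain ⟨a, b, rfl⟩ := h
  cases a with
  | zero =>
    cases b with
    | zero => simp at hne
    | succ b => exact ⟨2 ^ 0 * 3 ^ b, by rw [pow_succ]; ring⟩
  | succ a => exact absurd ⟨2 ^ a * 3 ^ b, by rw [pow_succ]; ring⟩ hodd

/-- If a part is not divisible by 3 and not `1`, it is even. -/
lemma form_two_dvd {x : ℕ} (h : ∃ a b : ℕ, x = 2 ^ a * 3 ^ b) (h3 : ¬ 3 ∣ x)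
    (hne : x ≠ 1) : 2 ∣ x := by
  obtain ⟨a, b, rfl⟩ := h
  cases b with
  | zero =>
    cases a with
    | zero => simp at hne
    | succ a => exact ⟨2 ^ a * 3 ^ 0, by rw [pow_succ]; ring⟩
  | succ b => exact absurd ⟨2 ^ a * 3 ^ b, by rw [pow_succ]; ring⟩ h3

/-- The last part of a chained partition divides every part. -/
lemma getLast_dvd {l : List ℕ} (hc : List.Chain' (fun x y => y ∣ x ∧ y < x) l)
    (h : l ≠ []) {x : ℕ} (hx : x ∈ l) : l.getLast h ∣ x := by
  have hp := List.isChain_iff_pairwise.mp hc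
  rw [← List.dropLast_append_getLast h] at hp hx
  rw [List.pairwise_append] at hp
  rcases List.mem_append.mp hx with h1 | h1
  · exact (hp.2.2 x h1 _ (List.mem_singleton_self _)).1
  · rw [List.mem_singleton.mp h1]

lemma sum_map_mul (k : ℕ) (l : List ℕ) : (l.map (fun x => k * x)).sum = k * l.sum := by
  induction l with
  | nil => simp
  | cons a t ih => simp [ih, Nat.mul_add]

lemma omega_scale {k n : ℕ} (hk : 0 < k)
    (hf : ∀ x : ℕ, (∃ a b : ℕ, x = 2 ^ a * 3 ^ b) → ∃ a b : ℕ, k * x = 2 ^ a * 3 ^ b)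
    {m : List ℕ} (hm : m ∈ Omega 2 3 n) : m.map (fun x => k * x) ∈ Omega 2 3 (k * n) := by
  obtain ⟨hform, hchain, hsum⟩ := hm
  refine ⟨?_, ?_, ?_⟩
  · intro x hx
    obtain ⟨y, hy, rfl⟩ := List.mem_map.mp hx
    exact hf y (hform y hy)
  · change List.IsChain _ _
    rw [List.isChain_map]
    exact hchain.imp fun a b hab =>
      ⟨Nat.mul_dvd_mul_left k hab.1, (Nat.mul_lt_mul_left hk).mpr hab.2⟩
  · rw [sum_map_mul, hsum]

lemma omega_unscale {k n : ℕ} (hk : 0 < k)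
    (hf : ∀ x : ℕ, (∃ a b : ℕ, k * x = 2 ^ a * 3 ^ b) → ∃ a b : ℕ, x = 2 ^ a * 3 ^ b)
    {l : List ℕ} (hl : l ∈ Omega 2 3 (k * n)) (hdvd : ∀ x ∈ l, k ∣ x) :
    ∃ m ∈ Omega 2 3 n, l = m.map (fun x => k * x) := by
  obtain ⟨hform, hchain, hsum⟩ := hl
  have hrepr : l = (l.map (· / k)).map (fun x => k * x) := by
    rw [List.map_map]
    exact ((List.map_congr_left fun x hx =>
      (Nat.mul_div_cancel' (hdvd x hx) : k * (x / k) = x)).trans (List.map_id l)).symm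
  refine ⟨l.map (· / k), ⟨?_, ?_, ?_⟩, hrepr⟩
  · intro x hx
    have hmem : k * x ∈ l := by
      rw [hrepr]
      exact List.mem_map_of_mem hx
    exact hf x (hform _ hmem)
  · have := hchain
    change List.IsChain _ _ at this
    rw [hrepr, List.isChain_map] at this
    exact this.imp fun a b hab =>
      ⟨(Nat.mul_dvd_mul_iff_left hk).mp hab.1, Nat.lt_of_mul_lt_mul_left hab.2⟩
  · have : ((l.map (· / k)).map (fun x => k * x)).sum = k * n := by rw [← hrepr, hsum]
    rw [sum_map_mul] at this
    exact Nat.eq_of_mul_eq_mul_left hk this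

/-- Partitions whose parts are not all divisible by 3. -/
def Hset (n : ℕ) : Set (List ℕ) := {l | l ∈ Omega 2 3 n ∧ ¬ ∀ x ∈ l, 3 ∣ x}

noncomputable def hcard (n : ℕ) : ℕ := (Hset n).ncard

lemma omega_finite (n : ℕ) : (Omega 2 3 n).Finite := by
  have h1 : Omega 2 3 n ⊆
      (List.map (fun x : Fin (n + 1) => (x : ℕ))) '' {l : List (Fin (n + 1)) | l.length ≤ n} := by
    rintro l ⟨hform, _, hsum⟩
    have hpos : ∀ x ∈ l, 1 ≤ x := fun x hx => form_pos (hform x hx)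
    have hle : ∀ x ∈ l, x ≤ n := fun x hx => hsum ▸ List.le_sum_of_mem hx
    refine ⟨l.map (fun x => (⟨x % (n + 1), Nat.mod_lt _ (Nat.succ_pos n)⟩ : Fin (n + 1))), ?_, ?_⟩
    · simpa using hsum ▸ List.length_le_sum_of_one_le l hpos
    · rw [List.map_map]
      refine (List.map_congr_left fun x hx => ?_).trans (List.map_id l)
      simp [Nat.mod_eq_of_lt (Nat.lt_succ_of_le (hle x hx))]
  exact ((List.finite_length_le (Fin (n + 1)) n).image _).subset h1

lemma omegaStar_subset (n : ℕ) : OmegaStar 2 3 n ⊆ Omega 2 3 n := fun _ h => h.1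

lemma omegaStar_finite (n : ℕ) : (OmegaStar 2 3 n).Finite :=
  (omega_finite n).subset (omegaStar_subset n)

lemma hset_finite (n : ℕ) : (Hset n).Finite :=
  (omega_finite n).subset fun _ h => h.1

lemma ncard_map_image (k : ℕ) (hk : 0 < k) (s : Set (List ℕ)) :
    ((List.map (fun x => k * x)) '' s).ncard = s.ncard :=
  Set.ncard_image_of_injective s (List.map_injective_iff.mpr fun a b hab => Nat.eq_of_mul_eq_mul_left hk hab)

/-- Nonemptiness of partitions of a positive integer. -/
lemma ne_nil_of_mem {n : ℕ} (hn : n ≠ 0) {l : List ℕ} (hl : l ∈ Omega 2 3 n) : l ≠ [] := by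
  rintro rfl
  exact hn hl.2.2.symm

/-- The last part divides `n`. -/
lemma getLast_dvd_n {n : ℕ} {l : List ℕ} (hl : l ∈ Omega 2 3 n) (h : l ≠ []) :
    l.getLast h ∣ n := by
  rw [← hl.2.2]
  exact List.dvd_sum fun x hx => getLast_dvd hl.2.1 h hx

/-- L1 split: `W (n+1) = Wstar (n+1) + Wstar n`. -/
lemma W_split_one (n : ℕ) : W 2 3 (n + 1) = Wstar 2 3 (n + 1) + Wstar 2 3 n := by
  have hsets : Omega 2 3 (n + 1) =
      OmegaStar 2 3 (n + 1) ∪ (fun l => l ++ [1]) '' OmegaStar 2 3 n := by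
    ext l
    constructor
    · intro hl
      by_cases h1 : 1 ∈ l
      · right
        have hne : l ≠ [] := ne_nil_of_mem (by omega) hl
        have hlast : l.getLast hne = 1 := Nat.dvd_one.mp (getLast_dvd hl.2.1 hne h1)
        have hrepr : l = l.dropLast ++ [1] := by
          conv_lhs => rw [← List.dropLast_append_getLast hne, hlast]
        refine ⟨l.dropLast, ⟨⟨?_, ?_, ?_⟩, ?_⟩, hrepr.symm⟩
        · exact fun x hx => hl.1 x (List.dropLast_subset l hx)
        · have := hl.2.1
          rw [hrepr] at this
          exact this.left_of_append
        · have hs := hl.2.2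
          conv_lhs at hs => rw [hrepr]
          rw [List.sum_append] at hs
          simp at hs
          omega
        · intro hmem
          have hp := List.isChain_iff_pairwise.mp hl.2.1
          rw [hrepr, List.pairwise_append] at hp
          have := (hp.2.2 1 hmem 1 (List.mem_singleton_self _)).2
          omega
      · exact Or.inl ⟨hl, h1⟩
    · rintro (hl | ⟨m, ⟨⟨hform, hchain, hsum⟩, h1⟩, rfl⟩)
      · exact hl.1
      · refine ⟨?_, ?_, ?_⟩
        · intro x hx
          rcases List.mem_append.mp hx with h | h
          · exact hform x h
          · exact ⟨0, 0, by simpa using List.mem_singleton.mp h⟩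
        · refine hchain.append (List.isChain_singleton 1) ?_
          intro x hx y hy
          have hxm : x ∈ m := List.mem_of_mem_getLast? hx
          have hyy : (1 : ℕ) = y := by simpa using hy
          subst hyy
          have hx1 : 1 ≤ x := form_pos (hform x hxm)
          have hxne : x ≠ 1 := fun h => h1 (h ▸ hxm)
          exact ⟨one_dvd x, by omega⟩
        · rw [List.sum_append, hsum]; simp
  have hdisj : Disjoint (OmegaStar 2 3 (n + 1)) ((fun l => l ++ [1]) '' OmegaStar 2 3 n) := by
    rw [Set.disjoint_left]
    rintro l ⟨_, h1⟩ ⟨m, _, rfl⟩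
    exact h1 (List.mem_append.mpr (Or.inr (List.mem_singleton_self _)))
  rw [W, hsets, Set.ncard_union_eq hdisj (omegaStar_finite _)
    ((omegaStar_finite n).image _), Wstar, Wstar,
    Set.ncard_image_of_injective _ (List.append_left_injective [1])]

/-- L2 split: for `3 ∣ n`, `W n = hcard n + W (n/3)`. -/
lemma W_split_three (m : ℕ) : W 2 3 (3 * m) = hcard (3 * m) + W 2 3 m := by
  have hsets : Omega 2 3 (3 * m) =
      Hset (3 * m) ∪ (List.map (fun x => 3 * x)) '' Omega 2 3 m := by
    ext l
    constructor
    · intro hl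
      by_cases hall : ∀ x ∈ l, 3 ∣ x
      · right
        obtain ⟨m', hm', rfl⟩ := omega_unscale (by norm_num) (fun x => form_of_three_mul) hl hall
        exact ⟨m', hm', rfl⟩
      · exact Or.inl ⟨hl, hall⟩
    · rintro (hl | ⟨m', hm', rfl⟩)
      · exact hl.1
      · exact omega_scale (by norm_num) (fun x => form_mul_three) hm'
  have hdisj : Disjoint (Hset (3 * m)) ((List.map (fun x => 3 * x)) '' Omega 2 3 m) := by
    rw [Set.disjoint_left]
    rintro l ⟨_, hall⟩ ⟨m', _, rfl⟩
    exact hall fun x hx => by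
      obtain ⟨y, _, rfl⟩ := List.mem_map.mp hx
      exact Dvd.intro y rfl
  rw [W, hsets, Set.ncard_union_eq hdisj (hset_finite _) ((omega_finite m).image _),
    hcard, ncard_map_image 3 (by norm_num), W]

/-- L3: for `2 ∣ n`, `3 ∤ n`: `Wstar n = W (n/2)`. -/
lemma Wstar_even (m : ℕ) (h3 : ¬ 3 ∣ 2 * m) : Wstar 2 3 (2 * m) = W 2 3 m := by
  have hsets : OmegaStar 2 3 (2 * m) = (List.map (fun x => 2 * x)) '' Omega 2 3 m := by
    ext l
    constructor
    · rintro ⟨hl, h1⟩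
      have hne : l ≠ [] := ne_nil_of_mem (by intro h0; exact h3 ⟨0, by omega⟩) hl
      set s := l.getLast hne with hs
      have hsl : s ∈ l := List.getLast_mem hne
      have hs3 : ¬ 3 ∣ s := fun h => h3 ((h.trans (getLast_dvd_n hl hne)))
      have hs2 : 2 ∣ s := form_two_dvd (hl.1 s hsl) hs3 (fun h => h1 (h ▸ hsl))
      have hall : ∀ x ∈ l, 2 ∣ x := fun x hx => hs2.trans (getLast_dvd hl.2.1 hne hx)
      obtain ⟨m', hm', rfl⟩ := omega_unscale (by norm_num) (fun x => form_of_two_mul) hl hall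
      exact ⟨m', hm', rfl⟩
    · rintro ⟨m', hm', rfl⟩
      refine ⟨omega_scale (by norm_num) (fun x => form_mul_two) hm', ?_⟩
      intro hmem
      obtain ⟨y, _, hy⟩ := List.mem_map.mp hmem
      omega
  rw [Wstar, hsets, ncard_map_image 2 (by norm_num), W]

/-- L4: for `n` odd and not divisible by 3, there are no 1-free partitions. -/
lemma Wstar_coprime {n : ℕ} (h2 : ¬ 2 ∣ n) (h3 : ¬ 3 ∣ n) : Wstar 2 3 n = 0 := by
  have : OmegaStar 2 3 n = ∅ := by
    rw [Set.eq_empty_iff_forall_notMem]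
    rintro l ⟨hl, h1⟩
    have hne : l ≠ [] := ne_nil_of_mem (by intro h0; exact h3 ⟨0, by omega⟩) hl
    set s := l.getLast hne with hs
    have hsl : s ∈ l := List.getLast_mem hne
    have hsn : s ∣ n := getLast_dvd_n hl hne
    have hs3 : ¬ 3 ∣ s := fun h => h3 (h.trans hsn)
    have hs2 : ¬ 2 ∣ s := fun h => h2 (h.trans hsn)
    exact hs2 (form_two_dvd (hl.1 s hsl) hs3 (fun h => h1 (h ▸ hsl)))
  rw [Wstar, this, Set.ncard_empty]

/-- L5: for `3 ∣ n`, `n` odd: `Wstar n = W (n/3)`. -/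
lemma Wstar_odd_three (m : ℕ) (h2 : ¬ 2 ∣ 3 * m) : Wstar 2 3 (3 * m) = W 2 3 m := by
  have hsets : OmegaStar 2 3 (3 * m) = (List.map (fun x => 3 * x)) '' Omega 2 3 m := by
    ext l
    constructor
    · rintro ⟨hl, h1⟩
      have hne : l ≠ [] := ne_nil_of_mem (by intro h0; exact h2 ⟨0, by omega⟩) hl
      set s := l.getLast hne with hs
      have hsl : s ∈ l := List.getLast_mem hne
      have hs2 : ¬ 2 ∣ s := fun h => h2 (h.trans (getLast_dvd_n hl hne))
      have hs3 : 3 ∣ s := form_three_dvd (hl.1 s hsl) hs2 (fun h => h1 (h ▸ hsl))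
      have hall : ∀ x ∈ l, 3 ∣ x := fun x hx => hs3.trans (getLast_dvd hl.2.1 hne hx)
      obtain ⟨m', hm', rfl⟩ := omega_unscale (by norm_num) (fun x => form_of_three_mul) hl hall
      exact ⟨m', hm', rfl⟩
    · rintro ⟨m', hm', rfl⟩
      refine ⟨omega_scale (by norm_num) (fun x => form_mul_three) hm', ?_⟩
      intro hmem
      obtain ⟨y, _, hy⟩ := List.mem_map.mp hmem
      omega
  rw [Wstar, hsets, ncard_map_image 3 (by norm_num), W]

/-- L6: for `6 ∣ n`: `Wstar n = W (n/3) + hcard (n/2)`. -/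
lemma Wstar_six (m : ℕ) : Wstar 2 3 (6 * m) = W 2 3 (2 * m) + hcard (3 * m) := by
  have e3 : 6 * m = 3 * (2 * m) := by ring
  have e2 : 6 * m = 2 * (3 * m) := by ring
  have hsets : OmegaStar 2 3 (6 * m) =
      (List.map (fun x => 3 * x)) '' Omega 2 3 (2 * m) ∪
      (List.map (fun x => 2 * x)) '' Hset (3 * m) := by
    ext l
    constructor
    · rintro ⟨hl, h1⟩
      by_cases hall : ∀ x ∈ l, 3 ∣ x
      · left
        rw [e3] at hl
        obtain ⟨m', hm', rfl⟩ := omega_unscale (by norm_num) (fun x => form_of_three_mul) hl hall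
        exact ⟨m', hm', rfl⟩
      · right
        push_neg at hall
        obtain ⟨x0, hx0l, hx03⟩ := hall
        have hne : l ≠ [] := by rintro rfl; simp at hx0l
        set s := l.getLast hne with hs
        have hsl : s ∈ l := List.getLast_mem hne
        have hs3 : ¬ 3 ∣ s := fun h => hx03 (h.trans (getLast_dvd hl.2.1 hne hx0l))
        have hs2 : 2 ∣ s := form_two_dvd (hl.1 s hsl) hs3 (fun h => h1 (h ▸ hsl))
        have hall2 : ∀ x ∈ l, 2 ∣ x := fun x hx => hs2.trans (getLast_dvd hl.2.1 hne hx)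
        rw [e2] at hl
        obtain ⟨m', hm', rfl⟩ := omega_unscale (by norm_num) (fun x => form_of_two_mul) hl hall2
        refine ⟨m', ⟨hm', ?_⟩, rfl⟩
        intro hallm
        obtain ⟨y0, hy0, rfl⟩ := List.mem_map.mp hx0l
        exact hx03 ((hallm y0 hy0).mul_left 2)
    · rintro (⟨m', hm', rfl⟩ | ⟨m', ⟨hm', _⟩, rfl⟩)
      · refine ⟨by rw [e3]; exact omega_scale (by norm_num) (fun x => form_mul_three) hm', ?_⟩
        intro hmem
        obtain ⟨y, _, hy⟩ := List.mem_map.mp hmem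
        omega
      · refine ⟨by rw [e2]; exact omega_scale (by norm_num) (fun x => form_mul_two) hm', ?_⟩
        intro hmem
        obtain ⟨y, _, hy⟩ := List.mem_map.mp hmem
        omega
  have hdisj : Disjoint ((List.map (fun x => 3 * x)) '' Omega 2 3 (2 * m))
      ((List.map (fun x => 2 * x)) '' Hset (3 * m)) := by
    rw [Set.disjoint_left]
    rintro l ⟨m3, _, rfl⟩ ⟨m2, ⟨_, hnall⟩, heq⟩
    apply hnall
    intro y hy
    have h2y : 2 * y ∈ List.map (fun x => 3 * x) m3 := by
      rw [← heq]; exact List.mem_map_of_mem hy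
    obtain ⟨z, _, hz⟩ := List.mem_map.mp h2y
    omega
  rw [Wstar, hsets, Set.ncard_union_eq hdisj ((omega_finite _).image _) ((hset_finite _).image _),
    ncard_map_image 3 (by norm_num), ncard_map_image 2 (by norm_num), W, hcard]

/-- The key recursion: `W (3V) = W (3V - 1) + W V` for `V ≥ 1`. -/
lemma W_key : ∀ V : ℕ, 1 ≤ V → W 2 3 (3 * V) = W 2 3 (3 * V - 1) + W 2 3 V := by
  intro V
  induction V using Nat.strong_induction_on with
  | _ V IH =>
    intro hV
    rcases Nat.even_or_odd V with hE | hO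
    · obtain ⟨T, rfl⟩ : ∃ T, V = 2 * T := ⟨V / 2, by rcases hE with ⟨t, ht⟩; omega⟩
      have hT1 : 1 ≤ T := by omega
      rw [show 3 * (2 * T) = 6 * T by ring]
      have ha : W 2 3 (6 * T) = Wstar 2 3 (6 * T) + Wstar 2 3 (6 * T - 1) := by
        have := W_split_one (6 * T - 1)
        rwa [show 6 * T - 1 + 1 = 6 * T by omega] at this
      have hb : Wstar 2 3 (6 * T - 1) = 0 := Wstar_coprime (by omega) (by omega)
      have hc : Wstar 2 3 (6 * T) = W 2 3 (2 * T) + hcard (3 * T) := Wstar_six T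
      have hd : W 2 3 (3 * T) = hcard (3 * T) + W 2 3 T := W_split_three T
      have he : W 2 3 (3 * T) = W 2 3 (3 * T - 1) + W 2 3 T := IH T (by omega) hT1
      have hf : W 2 3 (6 * T - 1) = Wstar 2 3 (6 * T - 1) + Wstar 2 3 (6 * T - 2) := by
        have := W_split_one (6 * T - 2)
        rwa [show 6 * T - 2 + 1 = 6 * T - 1 by omega] at this
      have hg : Wstar 2 3 (6 * T - 2) = W 2 3 (3 * T - 1) := by
        have := Wstar_even (3 * T - 1) (by omega)
        rwa [show 2 * (3 * T - 1) = 6 * T - 2 by omega] at this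
      omega
    · obtain ⟨T, rfl⟩ := hO
      rw [show 3 * (2 * T + 1) = 6 * T + 3 by ring]
      have ha : W 2 3 (6 * T + 3) = Wstar 2 3 (6 * T + 3) + Wstar 2 3 (6 * T + 2) := by
        have := W_split_one (6 * T + 2)
        rwa [show 6 * T + 2 + 1 = 6 * T + 3 by omega] at this
      have hb : Wstar 2 3 (6 * T + 3) = W 2 3 (2 * T + 1) := by
        have := Wstar_odd_three (2 * T + 1) (by omega)
        rwa [show 3 * (2 * T + 1) = 6 * T + 3 by ring] at this
      have hc : W 2 3 (6 * T + 2) = Wstar 2 3 (6 * T + 2) + Wstar 2 3 (6 * T + 1) := by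
        have := W_split_one (6 * T + 1)
        rwa [show 6 * T + 1 + 1 = 6 * T + 2 by omega] at this
      have hd : Wstar 2 3 (6 * T + 1) = 0 := Wstar_coprime (by omega) (by omega)
      have he : W 2 3 (6 * T + 3 - 1) = W 2 3 (6 * T + 2) := by
        rw [show 6 * T + 3 - 1 = 6 * T + 2 by omega]
      omega

end SCAux

theorem W_three_U_add_one (U : ℕ) (hU : 1 ≤ U) :
    W 2 3 (3 * U + 1) = W 2 3 U + W 2 3 (3 * ((U + 1) / 2) - 1) := by
  open SCAux in
  rcases Nat.even_or_odd U with hE | hO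
  · obtain ⟨V, rfl⟩ : ∃ V, U = 2 * V := ⟨U / 2, by rcases hE with ⟨t, ht⟩; omega⟩
    have hV1 : 1 ≤ V := by omega
    rw [show 3 * (2 * V) + 1 = 6 * V + 1 by ring,
      show 3 * ((2 * V + 1) / 2) - 1 = 3 * V - 1 by omega]
    have ha : W 2 3 (6 * V + 1) = Wstar 2 3 (6 * V + 1) + Wstar 2 3 (6 * V) := by
      have := W_split_one (6 * V)
      rwa [show 6 * V + 1 = 6 * V + 1 from rfl] at this
    have hb : Wstar 2 3 (6 * V + 1) = 0 := Wstar_coprime (by omega) (by omega)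
    have hc : Wstar 2 3 (6 * V) = W 2 3 (2 * V) + hcard (3 * V) := Wstar_six V
    have hd : W 2 3 (3 * V) = hcard (3 * V) + W 2 3 V := W_split_three V
    have he : W 2 3 (3 * V) = W 2 3 (3 * V - 1) + W 2 3 V := W_key V hV1
    omega
  · obtain ⟨V, rfl⟩ := hO
    rw [show 3 * (2 * V + 1) + 1 = 6 * V + 4 by ring,
      show 3 * ((2 * V + 1 + 1) / 2) - 1 = 3 * V + 2 by omega]
    have ha : W 2 3 (6 * V + 4) = Wstar 2 3 (6 * V + 4) + Wstar 2 3 (6 * V + 3) := by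
      have := W_split_one (6 * V + 3)
      rwa [show 6 * V + 3 + 1 = 6 * V + 4 by omega] at this
    have hb : Wstar 2 3 (6 * V + 4) = W 2 3 (3 * V + 2) := by
      have := Wstar_even (3 * V + 2) (by omega)
      rwa [show 2 * (3 * V + 2) = 6 * V + 4 by ring] at this
    have hc : Wstar 2 3 (6 * V + 3) = W 2 3 (2 * V + 1) := by
      have := Wstar_odd_three (2 * V + 1) (by omega)
      rwa [show 3 * (2 * V + 1) = 6 * V + 3 by ring] at this
    omega
end
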